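/- arXiv:0812.1612 — 3 statements merged into one kernel-verified Lean document; each statement's English description precedes it below -/
import Mathlib

section
/- Let k be an algebraically closed field of characteristic zero and let R = k[x,y] be the polynomial ring in two variables, equipped with a Poisson bracket satisfying {x,y} = xy. Then the Poisson-primitive ideals of R are exactly the maximal ideals ⟨x − α, y⟩ for α ∈ k, the maximal ideals ⟨x, y − β⟩ for β ∈ k, and the zero ideal. In particular, for α, β ∈ k both nonzero, the Poisson core of the maximal ideal ⟨x − α, y − β⟩ is the zero ideal, and neither ⟨x⟩ nor ⟨y⟩ is Poisson-primitive. -/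
/-- A Poisson bracket on a commutative `k`-algebra `R`: a `k`-bilinear,
antisymmetric map satisfying the Jacobi and Leibniz identities. -/
structure PoissonBracket (k : Type*) (R : Type*) [CommRing k] [CommRing R] [Algebra k R] where
  bracket : R → R → R
  add_left : ∀ a b c : R, bracket (a + b) c = bracket a c + bracket b c
  add_right : ∀ a b c : R, bracket a (b + c) = bracket a b + bracket a c
  smul_left : ∀ (t : k) (a b : R), bracket (t • a) b = t • bracket a b
  smul_right : ∀ (t : k) (a b : R), bracket a (t • b) = t • bracket a b
  antisymm : ∀ a b : R, bracket a b = - bracket b a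
  jacobi : ∀ a b c : R,
    bracket a (bracket b c) + bracket b (bracket c a) + bracket c (bracket a b) = 0
  leibniz : ∀ a b c : R, bracket a (b * c) = bracket a b * c + b * bracket a c

/-- An ideal `I` is a Poisson ideal if `{R, I} ⊆ I`. -/
def IsPoissonIdeal {k R : Type*} [CommRing k] [CommRing R] [Algebra k R]
    (B : PoissonBracket k R) (I : Ideal R) : Prop :=
  ∀ a : R, ∀ x ∈ I, B.bracket a x ∈ I

/-- The Poisson core of an ideal `J`: the largest Poisson ideal contained in `J`,
i.e. the sum of all Poisson ideals contained in `J`. -/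
def poissonCore {k R : Type*} [CommRing k] [CommRing R] [Algebra k R]
    (B : PoissonBracket k R) (J : Ideal R) : Ideal R :=
  sSup {I : Ideal R | IsPoissonIdeal B I ∧ I ≤ J}

/-- A Poisson-primitive ideal: the Poisson core of some maximal ideal. -/
def IsPoissonPrimitive {k R : Type*} [CommRing k] [CommRing R] [Algebra k R]
    (B : PoissonBracket k R) (P : Ideal R) : Prop :=
  ∃ m : Ideal R, m.IsMaximal ∧ poissonCore B m = P

open MvPolynomial

section Bracket

variable {k R : Type*} [CommRing k] [CommRing R] [Algebra k R] (B : PoissonBracket k R)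

lemma PB_zero_right (a : R) : B.bracket a 0 = 0 := by
  have h := B.add_right a 0 0
  rw [add_zero] at h
  exact left_eq_add.mp h

lemma PB_one_right (a : R) : B.bracket a 1 = 0 := by
  have h := B.leibniz a 1 1
  simp only [mul_one, one_mul] at h
  exact left_eq_add.mp h

lemma PB_neg_right (a b : R) : B.bracket a (-b) = - B.bracket a b := by
  have h := B.add_right a b (-b)
  rw [add_neg_cancel, PB_zero_right] at h
  exact eq_neg_of_add_eq_zero_right h.symm

lemma PB_sub_right (a b c : R) : B.bracket a (b - c) = B.bracket a b - B.bracket a c := by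
  rw [sub_eq_add_neg, B.add_right, PB_neg_right, sub_eq_add_neg]

lemma PB_zero_left (a : R) : B.bracket 0 a = 0 := by
  rw [B.antisymm, PB_zero_right, neg_zero]

lemma PB_one_left (a : R) : B.bracket 1 a = 0 := by
  rw [B.antisymm, PB_one_right, neg_zero]

end Bracket

section Helpers

variable {k : Type*} [Field k] [CharZero k]

/-- coefficient formula for pderiv -/
lemma my_coeff_pderiv (i : Fin 2) (m : Fin 2 →₀ ℕ) (f : MvPolynomial (Fin 2) k) :
    coeff m (pderiv i f) = ((m i + 1 : ℕ) : k) * coeff (m + Finsupp.single i 1) f := by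
  induction f using MvPolynomial.induction_on' with
  | add p q hp hq => simp [hp, hq, mul_add]
  | monomial u a =>
    rw [pderiv_monomial]
    by_cases h : u = m + Finsupp.single i 1
    · subst h
      rw [coeff_monomial, if_pos (by simp), coeff_monomial, if_pos rfl]
      simp [mul_comm]
    · rw [coeff_monomial, coeff_monomial, if_neg h]
      by_cases h2 : u i = 0
      · have hu : u - Finsupp.single i 1 = u := by
          ext j
          rw [Finsupp.tsub_apply, Finsupp.single_apply]
          by_cases hj : i = j
          · subst hj; simp [h2]
          · simp [hj]
        rw [hu]
        split_ifs with h3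
        · subst h3; simp [h2]
        · simp
      · rw [if_neg, mul_zero]
        intro h3
        apply h
        ext j
        rw [Finsupp.add_apply, Finsupp.single_apply]
        have := congrArg (fun v => v j) h3
        simp only [Finsupp.tsub_apply, Finsupp.single_apply] at this
        by_cases hj : i = j
        · subst hj; rw [if_pos rfl] at this ⊢; omega
        · rw [if_neg hj] at this ⊢; omega

lemma my_pderiv_comm (i j : Fin 2) (f : MvPolynomial (Fin 2) k) :
    pderiv i (pderiv j f) = pderiv j (pderiv i f) := by
  ext m
  rw [my_coeff_pderiv, my_coeff_pderiv, my_coeff_pderiv, my_coeff_pderiv]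
  rw [add_right_comm m (Finsupp.single i 1) (Finsupp.single j 1)]
  rw [← mul_assoc, ← mul_assoc]
  congr 1
  simp only [Finsupp.add_apply, Finsupp.single_apply]
  by_cases h : i = j
  · subst h; simp
  · rw [if_neg h, if_neg (fun e => h e.symm)]
    push_cast
    ring

lemma my_eq_C_of_coeff {g : MvPolynomial (Fin 2) k}
    (hg : ∀ m : Fin 2 →₀ ℕ, m ≠ 0 → coeff m g = 0) : g = C (coeff 0 g) := by
  ext m
  by_cases h : m = 0
  · subst h; simp
  · rw [hg m h, coeff_C, if_neg (fun e => h e.symm)]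

lemma my_const_of_pderiv {g : MvPolynomial (Fin 2) k}
    (h0 : pderiv 0 g = 0) (h1 : pderiv 1 g = 0) : g = C (coeff 0 g) := by
  apply my_eq_C_of_coeff
  intro m hm
  obtain ⟨i, hi⟩ : ∃ i, m i ≠ 0 := by
    by_contra hc
    push_neg at hc
    exact hm (Finsupp.ext fun a => hc a)
  have hpz : pderiv i g = 0 := by fin_cases i <;> assumption
  have := my_coeff_pderiv i (m - Finsupp.single i 1) g
  rw [hpz] at this
  have hms : m - Finsupp.single i 1 + Finsupp.single i 1 = m := by
    ext j
    simp only [Finsupp.add_apply, Finsupp.tsub_apply, Finsupp.single_apply]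
    by_cases hj : i = j
    · subst hj; simp; omega
    · simp [hj]
  rw [hms] at this
  have hne : ((((m - Finsupp.single i 1 : Fin 2 →₀ ℕ) i + 1 : ℕ)) : k) ≠ 0 :=
    Nat.cast_ne_zero.mpr (Nat.succ_ne_zero _)
  simpa [coeff_zero] using (mul_eq_zero.mp this.symm).resolve_left hne

lemma my_td_pderiv {f : MvPolynomial (Fin 2) k} {N : ℕ}
    (h : totalDegree f ≤ N + 1) (i : Fin 2) : totalDegree (pderiv i f) ≤ N := by
  apply Finset.sup_le
  intro m hm
  rw [mem_support_iff, my_coeff_pderiv] at hm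
  have hmem : m + Finsupp.single i 1 ∈ f.support := by
    rw [mem_support_iff]
    intro hz
    apply hm
    rw [hz, mul_zero]
  have hle := le_totalDegree hmem
  have hsum : ((m + Finsupp.single i 1).sum fun _ e => e)
      = (m.sum fun _ e => e) + 1 := by
    rw [Finsupp.sum_add_index' (fun _ => rfl) (fun _ _ _ => rfl)]
    rw [Finsupp.sum_single_index rfl]
  omega

end Helpers
section IterDeriv

variable {k : Type*} [Field k] [CharZero k]

/-- partial derivative as a plain function, for iteration -/
noncomputable def pd (i : Fin 2) (f : MvPolynomial (Fin 2) k) : MvPolynomial (Fin 2) k := pderiv i f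

lemma pd_add (i : Fin 2) (p q : MvPolynomial (Fin 2) k) :
    pd i (p + q) = pd i p + pd i q := map_add _ _ _

lemma it_add (i : Fin 2) : ∀ (n : ℕ) (p q : MvPolynomial (Fin 2) k),
    (pd i)^[n] (p + q) = (pd i)^[n] p + (pd i)^[n] q := by
  intro n
  induction n with
  | zero => intro p q; rfl
  | succ m ih =>
    intro p q
    rw [Function.iterate_succ_apply, Function.iterate_succ_apply,
      Function.iterate_succ_apply, pd_add, ih]

lemma it_Cmul (i : Fin 2) : ∀ (n : ℕ) (c : k) (p : MvPolynomial (Fin 2) k),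
    (pd i)^[n] (C c * p) = C c * (pd i)^[n] p := by
  intro n
  induction n with
  | zero => intro c p; rfl
  | succ m ih =>
    intro c p
    rw [Function.iterate_succ_apply, Function.iterate_succ_apply]
    show (pd i)^[m] (pderiv i (C c * p)) = _
    rw [pderiv_C_mul]
    exact ih c _

lemma it_mul_X_ne {i j : Fin 2} (h : j ≠ i) : ∀ (n : ℕ) (u : MvPolynomial (Fin 2) k),
    (pd i)^[n] (X j * u) = X j * (pd i)^[n] u := by
  intro n
  induction n with
  | zero => intro u; rfl
  | succ m ih =>
    intro u
    rw [Function.iterate_succ_apply, Function.iterate_succ_apply]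
    show (pd i)^[m] (pderiv i (X j * u)) = _
    rw [pderiv_mul, pderiv_X_of_ne h, zero_mul, zero_add]
    exact ih _

lemma it_mul_X_self (i : Fin 2) : ∀ (n : ℕ) (u : MvPolynomial (Fin 2) k),
    (pd i)^[n] (X i * u) = X i * (pd i)^[n] u + C (n : k) * (pd i)^[n - 1] u := by
  intro n
  induction n with
  | zero => intro u; simp
  | succ m ih =>
    intro u
    rw [Function.iterate_succ_apply]
    show (pd i)^[m] (pderiv i (X i * u)) = _
    rw [pderiv_mul, pderiv_X_self, one_mul]
    rw [show ((pd i)^[m] (u + X i * pderiv i u) : MvPolynomial (Fin 2) k)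
        = (pd i)^[m] u + (pd i)^[m] (X i * pd i u) from it_add i m _ _]
    rw [ih (pd i u)]
    cases m with
    | zero => simp; ring
    | succ l =>
      rw [Nat.succ_sub_one, Nat.succ_sub_one]
      rw [show ((pd i)^[l] (pd i u) : MvPolynomial (Fin 2) k) = (pd i)^[l + 1] u from
        (Function.iterate_succ_apply (pd i) l u).symm]
      rw [show ((pd i)^[l+1] (pd i u) : MvPolynomial (Fin 2) k) = (pd i)^[l + 2] u from
        (Function.iterate_succ_apply (pd i) (l+1) u).symm]
      rw [show ((l + 1 + 1 : ℕ) : k) = ((l + 1 : ℕ) : k) + 1 by push_cast; ring,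
        map_add, C_1]
      ring

lemma it_comm : ∀ (n : ℕ) (u : MvPolynomial (Fin 2) k),
    (pd 1)^[n] (pd 0 u) = pd 0 ((pd 1)^[n] u) := by
  intro n
  induction n with
  | zero => intro u; rfl
  | succ m ih =>
    intro u
    rw [Function.iterate_succ_apply, Function.iterate_succ_apply]
    show (pd 1)^[m] (pderiv 1 (pderiv 0 u)) = _
    rw [my_pderiv_comm]
    exact ih _

lemma my_taylor (x : Fin 2 → k) : ∀ (N : ℕ) (g : MvPolynomial (Fin 2) k),
    totalDegree g ≤ N →
    (∀ a b : ℕ, eval x ((pd 0)^[a] ((pd 1)^[b] g)) = 0) → g = 0 := by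
  intro N
  induction N with
  | zero =>
    intro g hdeg hv
    have hg : g = C (coeff 0 g) := by
      apply my_eq_C_of_coeff
      intro m hm
      by_contra hc
      have hmem : m ∈ g.support := mem_support_iff.mpr hc
      have := le_totalDegree hmem
      have hz : (m.sum fun _ e => e) = 0 := by omega
      apply hm
      ext j
      have hle : m j ≤ m.sum fun _ e => e := by
        by_cases hj : m j = 0
        · omega
        · exact Finset.single_le_sum (f := fun a => m a) (fun _ _ => Nat.zero_le _)
            (Finsupp.mem_support_iff.mpr hj)
      simp only [Finsupp.coe_zero, Pi.zero_apply]
      omega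
    have h00 := hv 0 0
    simp only [Function.iterate_zero, id] at h00
    rw [hg] at h00 ⊢
    rw [eval_C] at h00
    rw [h00, map_zero]
  | succ N ih =>
    intro g hdeg hv
    have h0 : pderiv 0 g = 0 := by
      apply ih _ (my_td_pderiv hdeg 0)
      intro a b
      show eval x ((pd 0)^[a] ((pd 1)^[b] (pd 0 g))) = 0
      rw [it_comm, show ((pd 0)^[a] (pd 0 ((pd 1)^[b] g)) : MvPolynomial (Fin 2) k)
        = (pd 0)^[a+1] ((pd 1)^[b] g) from (Function.iterate_succ_apply (pd 0) a _).symm]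
      exact hv (a + 1) b
    have h1 : pderiv 1 g = 0 := by
      apply ih _ (my_td_pderiv hdeg 1)
      intro a b
      show eval x ((pd 0)^[a] ((pd 1)^[b] (pd 1 g))) = 0
      rw [show ((pd 1)^[b] (pd 1 g) : MvPolynomial (Fin 2) k)
        = (pd 1)^[b+1] g from (Function.iterate_succ_apply (pd 1) b g).symm]
      exact hv a (b + 1)
    have hg := my_const_of_pderiv h0 h1
    have h00 := hv 0 0
    simp only [Function.iterate_zero, id] at h00
    rw [hg] at h00 ⊢
    rw [eval_C] at h00
    rw [h00, map_zero]

end IterDeriv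
section QuantumPlane

variable {k : Type*} [Field k] [CharZero k]
variable (B : PoissonBracket k (MvPolynomial (Fin 2) k))

lemma PB_C_left (t : k) (a : MvPolynomial (Fin 2) k) : B.bracket (C t) a = 0 := by
  have hC : (C t : MvPolynomial (Fin 2) k) = t • 1 := by
    rw [MvPolynomial.smul_eq_C_mul, mul_one]
  rw [hC, B.smul_left, PB_one_left, smul_zero]

lemma PB_C_right (a : MvPolynomial (Fin 2) k) (t : k) : B.bracket a (C t) = 0 := by
  rw [B.antisymm, PB_C_left, neg_zero]

lemma PB_self (a : MvPolynomial (Fin 2) k) : B.bracket a a = 0 := by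
  have h := B.antisymm a a
  have h2 : B.bracket a a + B.bracket a a = 0 := by
    nth_rewrite 1 [h]
    exact neg_add_cancel _
  have h3 : (2 : MvPolynomial (Fin 2) k) * B.bracket a a = 0 := by
    rw [two_mul]; exact h2
  rcases mul_eq_zero.mp h3 with h4 | h4
  · exact absurd h4 two_ne_zero
  · exact h4

variable (hB : B.bracket (X 0) (X 1) = X 0 * X 1)

include hB in
lemma brkY (f : MvPolynomial (Fin 2) k) :
    B.bracket f (X 1) = X 0 * X 1 * pderiv 0 f := by
  induction f using MvPolynomial.induction_on with
  | C a => rw [PB_C_left, pderiv_C, mul_zero]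
  | add p q hp hq => rw [B.add_left, hp, hq, map_add, mul_add]
  | mul_X p n hp =>
    have e : B.bracket (p * X n) (X 1)
        = B.bracket p (X 1) * X n + p * B.bracket (X n) (X 1) := by
      rw [B.antisymm, B.leibniz, B.antisymm (X 1) p, B.antisymm (X 1) (X n)]
      ring
    rw [e, hp]
    have h2 : n = 0 ∨ n = 1 := by fin_cases n <;> [exact Or.inl rfl; exact Or.inr rfl]
    rcases h2 with rfl | rfl
    · rw [hB, pderiv_mul, pderiv_X_self]
      ring
    · rw [PB_self, pderiv_mul, pderiv_X_of_ne (show (1 : Fin 2) ≠ 0 by decide)]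
      ring

include hB in
lemma brkX (f : MvPolynomial (Fin 2) k) :
    B.bracket f (X 0) = -(X 0 * X 1 * pderiv 1 f) := by
  induction f using MvPolynomial.induction_on with
  | C a => rw [PB_C_left, pderiv_C, mul_zero, neg_zero]
  | add p q hp hq => rw [B.add_left, hp, hq, map_add, mul_add]; ring
  | mul_X p n hp =>
    have e : B.bracket (p * X n) (X 0)
        = B.bracket p (X 0) * X n + p * B.bracket (X n) (X 0) := by
      rw [B.antisymm, B.leibniz, B.antisymm (X 0) p, B.antisymm (X 0) (X n)]
      ring
    rw [e, hp]
    have h2 : n = 0 ∨ n = 1 := by fin_cases n <;> [exact Or.inl rfl; exact Or.inr rfl]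
    rcases h2 with rfl | rfl
    · rw [PB_self, pderiv_mul, pderiv_X_of_ne (show (0 : Fin 2) ≠ 1 by decide)]
      ring
    · rw [show B.bracket (X 1) (X 0) = - B.bracket (X 0) (X 1) from B.antisymm _ _, hB,
        pderiv_mul, pderiv_X_self]
      ring

include hB in
lemma mem_pd0 {I : Ideal (MvPolynomial (Fin 2) k)} (hI : IsPoissonIdeal B I)
    {f : MvPolynomial (Fin 2) k} (hf : f ∈ I) : X 0 * X 1 * pderiv 0 f ∈ I := by
  have h : B.bracket f (X 1) ∈ I := by
    rw [B.antisymm]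
    exact I.neg_mem (hI (X 1) f hf)
  rwa [brkY B hB] at h

include hB in
lemma mem_pd1 {I : Ideal (MvPolynomial (Fin 2) k)} (hI : IsPoissonIdeal B I)
    {f : MvPolynomial (Fin 2) k} (hf : f ∈ I) : X 0 * X 1 * pderiv 1 f ∈ I := by
  have h : B.bracket f (X 0) ∈ I := by
    rw [B.antisymm]
    exact I.neg_mem (hI (X 0) f hf)
  rw [brkX B hB] at h
  simpa using I.neg_mem h

end QuantumPlane
section SpanLemmas

variable {k : Type*} [Field k] [CharZero k]

lemma mem_span_pt (x : Fin 2 → k) (p : MvPolynomial (Fin 2) k) :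
    p - C (eval x p) ∈ Ideal.span {X 0 - C (x 0), X 1 - C (x 1)} := by
  induction p using MvPolynomial.induction_on with
  | C a => rw [eval_C, sub_self]; exact zero_mem _
  | add p q hp hq =>
    have h := Ideal.add_mem _ hp hq
    have e : p + q - C (eval x (p + q)) = p - C (eval x p) + (q - C (eval x q)) := by
      rw [map_add, map_add]; ring
    rw [e]; exact h
  | mul_X p n hp =>
    have e : p * X n - C (eval x (p * X n))
        = (p - C (eval x p)) * X n + C (eval x p) * (X n - C (x n)) := by
      rw [show eval x (p * X n) = eval x p * x n by simp, map_mul]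
      ring
    rw [e]
    refine Ideal.add_mem _ (Ideal.mul_mem_right _ _ hp) (Ideal.mul_mem_left _ _ ?_)
    apply Ideal.subset_span
    have h2 : n = 0 ∨ n = 1 := by fin_cases n <;> [exact Or.inl rfl; exact Or.inr rfl]
    rcases h2 with rfl | rfl
    · exact Set.mem_insert _ _
    · exact Set.mem_insert_of_mem _ rfl

lemma span_le_ker (x : Fin 2 → k) :
    Ideal.span {X 0 - C (x 0), X 1 - C (x 1)} ≤ RingHom.ker (eval x) := by
  rw [Ideal.span_le]
  rintro g hg
  rcases hg with rfl | hg
  · simp [RingHom.mem_ker]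
  · rcases hg with rfl
    simp [RingHom.mem_ker]

lemma span_eq_vanishing (x : Fin 2 → k) :
    Ideal.span {X 0 - C (x 0), X 1 - C (x 1)} = MvPolynomial.vanishingIdeal k {x} := by
  apply le_antisymm
  · intro p hp
    rw [mem_vanishingIdeal_singleton_iff]
    exact RingHom.mem_ker.mp (span_le_ker x hp)
  · intro p hp
    rw [mem_vanishingIdeal_singleton_iff, aeval_eq_eval] at hp
    have h := mem_span_pt x p
    rwa [hp, map_zero, sub_zero] at h

lemma span_maximal (x : Fin 2 → k) :
    (Ideal.span {X 0 - C (x 0), X 1 - C (x 1)} : Ideal (MvPolynomial (Fin 2) k)).IsMaximal := by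
  rw [span_eq_vanishing x]
  infer_instance

variable (B : PoissonBracket k (MvPolynomial (Fin 2) k))
variable (hB : B.bracket (X 0) (X 1) = X 0 * X 1)

include hB in
lemma poisson_m1 (α : k) : IsPoissonIdeal B (Ideal.span {X 0 - C α, X 1}) := by
  intro a f hf
  set I := Ideal.span ({X 0 - C α, X 1} : Set (MvPolynomial (Fin 2) k)) with hIdef
  have hX1 : (X 1 : MvPolynomial (Fin 2) k) ∈ I :=
    Ideal.subset_span (Set.mem_insert_of_mem _ rfl)
  have hg1 : (X 0 - C α : MvPolynomial (Fin 2) k) ∈ I :=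
    Ideal.subset_span (Set.mem_insert _ _)
  have hbX0 : B.bracket a (X 0 - C α) ∈ I := by
    rw [PB_sub_right, PB_C_right, sub_zero, show B.bracket a (X 0) = - B.bracket (X 0) a
      from by rw [← B.antisymm], ← B.antisymm, brkX B hB]
    apply I.neg_mem
    rw [show X 0 * X 1 * pderiv 1 a = X 0 * pderiv 1 a * X 1 by ring]
    exact Ideal.mul_mem_left _ _ hX1
  have hbX1 : B.bracket a (X 1) ∈ I := by
    rw [brkY B hB, show X 0 * X 1 * pderiv 0 a = X 0 * pderiv 0 a * X 1 by ring]
    exact Ideal.mul_mem_left _ _ hX1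
  obtain ⟨u, v, huv⟩ := Ideal.mem_span_pair.mp hf
  rw [← huv, B.add_right, B.leibniz, B.leibniz]
  exact add_mem (add_mem (Ideal.mul_mem_left _ _ hg1) (Ideal.mul_mem_left _ _ hbX0))
    (add_mem (Ideal.mul_mem_left _ _ hX1) (Ideal.mul_mem_left _ _ hbX1))

include hB in
lemma poisson_m2 (β : k) : IsPoissonIdeal B (Ideal.span {X 0, X 1 - C β}) := by
  intro a f hf
  set I := Ideal.span ({X 0, X 1 - C β} : Set (MvPolynomial (Fin 2) k)) with hIdef
  have hX0 : (X 0 : MvPolynomial (Fin 2) k) ∈ I :=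
    Ideal.subset_span (Set.mem_insert _ _)
  have hg2 : (X 1 - C β : MvPolynomial (Fin 2) k) ∈ I :=
    Ideal.subset_span (Set.mem_insert_of_mem _ rfl)
  have hbX0 : B.bracket a (X 0) ∈ I := by
    rw [show B.bracket a (X 0) = - B.bracket (X 0) a from by rw [← B.antisymm],
      ← B.antisymm, brkX B hB]
    apply I.neg_mem
    rw [show X 0 * X 1 * pderiv 1 a = X 1 * pderiv 1 a * X 0 by ring]
    exact Ideal.mul_mem_left _ _ hX0
  have hbX1 : B.bracket a (X 1 - C β) ∈ I := by
    rw [PB_sub_right, PB_C_right, sub_zero, brkY B hB,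
      show X 0 * X 1 * pderiv 0 a = X 1 * pderiv 0 a * X 0 by ring]
    exact Ideal.mul_mem_left _ _ hX0
  obtain ⟨u, v, huv⟩ := Ideal.mem_span_pair.mp hf
  rw [← huv, B.add_right, B.leibniz, B.leibniz]
  exact add_mem (add_mem (Ideal.mul_mem_left _ _ hX0) (Ideal.mul_mem_left _ _ hbX0))
    (add_mem (Ideal.mul_mem_left _ _ hg2) (Ideal.mul_mem_left _ _ hbX1))

end SpanLemmas

section CoreLemmas

variable {k R : Type*} [CommRing k] [CommRing R] [Algebra k R] (B : PoissonBracket k R)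

lemma core_le (J : Ideal R) : poissonCore B J ≤ J :=
  sSup_le fun _ hI => hI.2

lemma core_of_poisson {J : Ideal R} (hJ : IsPoissonIdeal B J) : poissonCore B J = J :=
  le_antisymm (core_le B J) (le_sSup ⟨hJ, le_rfl⟩)

end CoreLemmas
section Vanish

variable {k : Type*} [Field k] [CharZero k]
variable (B : PoissonBracket k (MvPolynomial (Fin 2) k))

lemma eval_C_nat_mul (x : Fin 2 → k) (c : ℕ) (u : MvPolynomial (Fin 2) k)
    (h : c ≠ 0 → eval x u = 0) : eval x (C (c : k) * u) = 0 := by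
  rcases c with _ | c
  · simp
  · rw [map_mul, h (Nat.succ_ne_zero c), mul_zero]

include B in
lemma vanish (hB : B.bracket (X 0) (X 1) = X 0 * X 1) (x : Fin 2 → k)
    (hx0 : x 0 ≠ 0) (hx1 : x 1 ≠ 0) {I : Ideal (MvPolynomial (Fin 2) k)}
    (hI : IsPoissonIdeal B I) (hev : ∀ g ∈ I, eval x g = 0) :
    ∀ (n a b : ℕ), a + b = n → ∀ g ∈ I, eval x ((pd 0)^[a] ((pd 1)^[b] g)) = 0 := by
  intro n
  induction n using Nat.strong_induction_on with
  | _ n IH =>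
  intro a b hab g hg
  have h01 : (0 : Fin 2) ≠ 1 := by decide
  have h10 : (1 : Fin 2) ≠ 0 := by decide
  rcases a with _ | a'
  · rcases b with _ | b'
    · simpa using hev g hg
    · -- a = 0, b = b' + 1
      have hmem : X 0 * X 1 * pderiv 1 g ∈ I := mem_pd1 B hB hI hg
      have h0 := IH b' (by omega) 0 b' (by omega) _ hmem
      simp only [Function.iterate_zero, id_eq] at h0 ⊢
      have hexp : (pd 1)^[b'] (X 0 * X 1 * pderiv 1 g)
          = X 0 * (X 1 * (pd 1)^[b'] (pd 1 g))
            + C (b' : k) * (X 0 * (pd 1)^[b' - 1] (pd 1 g)) := by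
        rw [show X 0 * X 1 * pderiv 1 g = X 0 * (X 1 * pd 1 g) from by rw [pd]; ring]
        rw [it_mul_X_ne h01 b', it_mul_X_self 1 b']
        ring
      rw [hexp] at h0
      have hsecond : eval x (C (b' : k) * (X 0 * (pd 1)^[b' - 1] (pd 1 g))) = 0 := by
        apply eval_C_nat_mul
        intro hb'
        obtain ⟨c, rfl⟩ := Nat.exists_eq_succ_of_ne_zero hb'
        have hc := IH (c + 1) (by omega) 0 (c + 1) (by omega) g hg
        simp only [Function.iterate_zero, id_eq] at hc
        rw [Nat.succ_sub_one, show ((pd 1)^[c] (pd 1 g) : MvPolynomial (Fin 2) k)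
          = (pd 1)^[c + 1] g from (Function.iterate_succ_apply (pd 1) c g).symm]
        rw [map_mul, hc, mul_zero]
      rw [map_add, hsecond, add_zero] at h0
      rw [show ((pd 1)^[b'] (pd 1 g) : MvPolynomial (Fin 2) k)
        = (pd 1)^[b' + 1] g from (Function.iterate_succ_apply (pd 1) b' g).symm] at h0
      rw [map_mul, map_mul, eval_X, eval_X] at h0
      rcases mul_eq_zero.mp h0 with h | h
      · exact absurd h hx0
      rcases mul_eq_zero.mp h with h' | h'
      · exact absurd h' hx1
      · exact h'
  · -- a = a' + 1
    have hmem : X 0 * X 1 * pderiv 0 g ∈ I := mem_pd0 B hB hI hg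
    have h0 := IH (a' + b) (by omega) a' b rfl _ hmem
    have hexp : (pd 0)^[a'] ((pd 1)^[b] (X 0 * X 1 * pderiv 0 g))
        = X 1 * (X 0 * (pd 0)^[a' + 1] ((pd 1)^[b] g)
              + C (a' : k) * (pd 0)^[a' - 1] (pd 0 ((pd 1)^[b] g)))
          + C (b : k) * (X 0 * (pd 0)^[a' + 1] ((pd 1)^[b - 1] g)
              + C (a' : k) * (pd 0)^[a' - 1] (pd 0 ((pd 1)^[b - 1] g))) := by
      rw [show X 0 * X 1 * pderiv 0 g = X 1 * (X 0 * pd 0 g) from by rw [pd]; ring]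
      rw [it_mul_X_self 1 b, it_mul_X_ne h01 b, it_mul_X_ne h01 (b - 1)]
      rw [it_comm b, it_comm (b - 1)]
      rw [it_add, it_Cmul, it_mul_X_ne h10 a']
      rw [it_mul_X_self 0 a', it_mul_X_self 0 a']
      rw [show ((pd 0)^[a'] (pd 0 ((pd 1)^[b] g)) : MvPolynomial (Fin 2) k)
        = (pd 0)^[a' + 1] ((pd 1)^[b] g) from
          (Function.iterate_succ_apply (pd 0) a' _).symm]
      rw [show ((pd 0)^[a'] (pd 0 ((pd 1)^[b - 1] g)) : MvPolynomial (Fin 2) k)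
        = (pd 0)^[a' + 1] ((pd 1)^[b - 1] g) from
          (Function.iterate_succ_apply (pd 0) a' _).symm]
    rw [hexp] at h0
    -- the C (a') terms vanish
    have ea1 : eval x (C (a' : k) * (pd 0)^[a' - 1] (pd 0 ((pd 1)^[b] g))) = 0 := by
      apply eval_C_nat_mul
      intro ha'
      obtain ⟨c, rfl⟩ := Nat.exists_eq_succ_of_ne_zero ha'
      have hc := IH (c + 1 + b) (by omega) (c + 1) b rfl g hg
      rw [Nat.succ_sub_one, show ((pd 0)^[c] (pd 0 ((pd 1)^[b] g)) : MvPolynomial (Fin 2) k)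
        = (pd 0)^[c + 1] ((pd 1)^[b] g) from (Function.iterate_succ_apply (pd 0) c _).symm]
      exact hc
    have eb : eval x (C (b : k) * (X 0 * (pd 0)^[a' + 1] ((pd 1)^[b - 1] g)
        + C (a' : k) * (pd 0)^[a' - 1] (pd 0 ((pd 1)^[b - 1] g)))) = 0 := by
      apply eval_C_nat_mul
      intro hb
      obtain ⟨d, rfl⟩ := Nat.exists_eq_succ_of_ne_zero hb
      rw [Nat.succ_sub_one]
      have h1 : eval x ((pd 0)^[a' + 1] ((pd 1)^[d] g)) = 0 :=
        IH (a' + 1 + d) (by omega) (a' + 1) d rfl g hg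
      have h2 : eval x (C (a' : k) * (pd 0)^[a' - 1] (pd 0 ((pd 1)^[d] g))) = 0 := by
        apply eval_C_nat_mul
        intro ha'
        obtain ⟨c, rfl⟩ := Nat.exists_eq_succ_of_ne_zero ha'
        have hc := IH (c + 1 + d) (by omega) (c + 1) d rfl g hg
        rw [Nat.succ_sub_one, show ((pd 0)^[c] (pd 0 ((pd 1)^[d] g)) : MvPolynomial (Fin 2) k)
          = (pd 0)^[c + 1] ((pd 1)^[d] g) from (Function.iterate_succ_apply (pd 0) c _).symm]
        exact hc
      rw [map_add, map_mul, h1, mul_zero, zero_add, h2]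
    rw [map_add, eb, add_zero, map_mul, map_add, ea1, add_zero, map_mul, eval_X, eval_X] at h0
    rcases mul_eq_zero.mp h0 with h | h
    · exact absurd h hx1
    rcases mul_eq_zero.mp h with h' | h'
    · exact absurd h' hx0
    · exact h'

end Vanish

open MvPolynomial in
/-- the classification of Poisson-primitive ideals of `k[x,y]` with
`{x,y} = xy`, for `k` algebraically closed of characteristic zero. -/
theorem poisson_primitives_of_quantum_plane_limit (k : Type*) [Field k] [CharZero k]
    [IsAlgClosed k] (B : PoissonBracket k (MvPolynomial (Fin 2) k))
    (hB : B.bracket (X 0) (X 1) = X 0 * X 1) :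
    (∀ Q : Ideal (MvPolynomial (Fin 2) k),
      IsPoissonPrimitive B Q ↔
        ((∃ α : k, Q = Ideal.span {X 0 - C α, X 1}) ∨
         (∃ β : k, Q = Ideal.span {X 0, X 1 - C β}) ∨
         Q = ⊥)) ∧
    (∀ α β : k, α ≠ 0 → β ≠ 0 →
      poissonCore B (Ideal.span {X 0 - C α, X 1 - C β}) = ⊥) ∧
    ¬ IsPoissonPrimitive B (Ideal.span {(X 0 : MvPolynomial (Fin 2) k)}) ∧
    ¬ IsPoissonPrimitive B (Ideal.span {(X 1 : MvPolynomial (Fin 2) k)}) := by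
  have hcorebot : ∀ x : Fin 2 → k, x 0 ≠ 0 → x 1 ≠ 0 →
      poissonCore B (Ideal.span {X 0 - C (x 0), X 1 - C (x 1)}) = ⊥ := by
    intro x hx0 hx1
    apply le_antisymm _ bot_le
    apply sSup_le
    rintro I ⟨hIp, hIle⟩
    intro g hg
    rw [Ideal.mem_bot]
    have hev : ∀ h ∈ I, eval x h = 0 := fun h hh =>
      RingHom.mem_ker.mp (span_le_ker x (hIle hh))
    exact my_taylor x (totalDegree g) g le_rfl
      (fun a b => vanish B hB x hx0 hx1 hIp hev (a + b) a b rfl g hg)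
  have hprim_bot : IsPoissonPrimitive B (⊥ : Ideal (MvPolynomial (Fin 2) k)) := by
    refine ⟨Ideal.span {X 0 - C 1, X 1 - C 1}, ?_, ?_⟩
    · have h := span_maximal (k := k) ![1, 1]
      simpa using h
    · have h := hcorebot ![1, 1] (by simp) (by simp)
      simpa using h
  refine ⟨?_, ?_, ?_, ?_⟩
  · intro Q
    constructor
    · rintro ⟨m, hm, rfl⟩
      obtain ⟨x, rfl⟩ := (MvPolynomial.isMaximal_iff_eq_vanishingIdeal_singleton (I := m)).mp hm
      rw [← span_eq_vanishing x]
      by_cases hx1 : x 1 = 0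
      · left
        refine ⟨x 0, ?_⟩
        rw [hx1, map_zero, sub_zero]
        exact core_of_poisson B (poisson_m1 B hB (x 0))
      · by_cases hx0 : x 0 = 0
        · right; left
          refine ⟨x 1, ?_⟩
          rw [hx0, map_zero, sub_zero]
          exact core_of_poisson B (poisson_m2 B hB (x 1))
        · right; right
          exact hcorebot x hx0 hx1
    · rintro (⟨α, rfl⟩ | ⟨β, rfl⟩ | rfl)
      · refine ⟨Ideal.span {X 0 - C α, X 1}, ?_, core_of_poisson B (poisson_m1 B hB α)⟩
        have h := span_maximal (k := k) ![α, 0]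
        simpa using h
      · refine ⟨Ideal.span {X 0, X 1 - C β}, ?_, core_of_poisson B (poisson_m2 B hB β)⟩
        have h := span_maximal (k := k) ![0, β]
        simpa using h
      · exact hprim_bot
  · intro α β hα hβ
    have h := hcorebot ![α, β] (by simpa) (by simpa)
    simpa using h
  · rintro ⟨m, hm, hcore⟩
    obtain ⟨x, rfl⟩ := (MvPolynomial.isMaximal_iff_eq_vanishingIdeal_singleton (I := m)).mp hm
    have hX0m : (X 0 : MvPolynomial (Fin 2) k) ∈ MvPolynomial.vanishingIdeal k {x} := by
      have hle : Ideal.span {(X 0 : MvPolynomial (Fin 2) k)}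
          ≤ MvPolynomial.vanishingIdeal k {x} := by
        rw [← hcore]; exact core_le B _
      exact hle (Ideal.subset_span rfl)
    rw [mem_vanishingIdeal_singleton_iff, aeval_eq_eval, eval_X] at hX0m
    have hspan : MvPolynomial.vanishingIdeal k {x}
        = Ideal.span {(X 0 : MvPolynomial (Fin 2) k), X 1 - C (x 1)} := by
      rw [← span_eq_vanishing x, hX0m, map_zero, sub_zero]
    rw [hspan, core_of_poisson B (poisson_m2 B hB (x 1))] at hcore
    have hmem : (X 1 - C (x 1) : MvPolynomial (Fin 2) k)
        ∈ Ideal.span {(X 0 : MvPolynomial (Fin 2) k)} := by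
      rw [← hcore]; exact Ideal.subset_span (Set.mem_insert_of_mem _ rfl)
    obtain ⟨c, hc⟩ := Ideal.mem_span_singleton'.mp hmem
    have h := congrArg (eval ![(0 : k), x 1 + 1]) hc
    simp at h
  · rintro ⟨m, hm, hcore⟩
    obtain ⟨x, rfl⟩ := (MvPolynomial.isMaximal_iff_eq_vanishingIdeal_singleton (I := m)).mp hm
    have hX1m : (X 1 : MvPolynomial (Fin 2) k) ∈ MvPolynomial.vanishingIdeal k {x} := by
      have hle : Ideal.span {(X 1 : MvPolynomial (Fin 2) k)}
          ≤ MvPolynomial.vanishingIdeal k {x} := by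
        rw [← hcore]; exact core_le B _
      exact hle (Ideal.subset_span rfl)
    rw [mem_vanishingIdeal_singleton_iff, aeval_eq_eval, eval_X] at hX1m
    have hspan : MvPolynomial.vanishingIdeal k {x}
        = Ideal.span {(X 0 - C (x 0) : MvPolynomial (Fin 2) k), X 1} := by
      rw [← span_eq_vanishing x, hX1m, map_zero, sub_zero]
    rw [hspan, core_of_poisson B (poisson_m1 B hB (x 0))] at hcore
    have hmem : (X 0 - C (x 0) : MvPolynomial (Fin 2) k)
        ∈ Ideal.span {(X 1 : MvPolynomial (Fin 2) k)} := by
      rw [← hcore]; exact Ideal.subset_span (Set.mem_insert _ _)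
    obtain ⟨c, hc⟩ := Ideal.mem_span_singleton'.mp hmem
    have h := congrArg (eval ![x 0 + 1, (0 : k)]) hc
    simp at h
end

section
/- Let R = ℂ[x1, x2, x3] be the polynomial ring in three variables over the complex numbers, equipped with a Poisson bracket satisfying {x1,x2} = −x1·x2, {x1,x3} = −2·x1·x3, and {x2,x3} = −x2·x3. Then the prime ideals of R that are Poisson ideals are exactly the following: the maximal ideals ⟨x1 − α, x2, x3⟩, ⟨x1, x2 − β, x3⟩, ⟨x1, x2, x3 − γ⟩ for α, β, γ ∈ ℂ; the height two primes ⟨x1, x2⟩, ⟨x1, x3⟩, ⟨x2, x3⟩; the height one primes ⟨x1⟩, ⟨x2⟩, ⟨x3⟩, and ⟨x1·x3 − λ·x2²⟩ for λ ∈ ℂ \ {0}; and the zero ideal ⟨0⟩. -/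
open MvPolynomial

abbrev R3 := MvPolynomial (Fin 3) ℂ

section Bracket

variable (B : PoissonBracket ℂ R3)

theorem br_zero_right (a : R3) : B.bracket a 0 = 0 := by
  have h := B.add_right a 0 0
  simp only [add_zero] at h
  exact (left_eq_add.mp h)

theorem br_zero_left (a : R3) : B.bracket 0 a = 0 := by
  rw [B.antisymm, br_zero_right, neg_zero]

theorem br_one_right (a : R3) : B.bracket a 1 = 0 := by
  have h := B.leibniz a 1 1
  simp only [mul_one, one_mul] at h
  exact (left_eq_add.mp h)

theorem br_C_right (a : R3) (c : ℂ) : B.bracket a (C c) = 0 := by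
  have : (C c : R3) = c • (1 : R3) := by simp [MvPolynomial.smul_eq_C_mul]
  rw [this, B.smul_right, br_one_right, smul_zero]

theorem br_self (a : R3) : B.bracket a a = 0 := by
  have h := B.antisymm a a
  have h2 : (2 : ℂ) • B.bracket a a = 0 := by
    rw [two_smul]
    nth_rewrite 1 [h]; ring
  rcases smul_eq_zero.mp h2 with h3 | h3
  · norm_num at h3
  · exact h3

theorem br_neg_right (a b : R3) : B.bracket a (-b) = - B.bracket a b := by
  have h := B.add_right a b (-b)
  simp only [add_neg_cancel, br_zero_right] at h
  linear_combination -h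

theorem br_sub_right (a b c : R3) : B.bracket a (b - c) = B.bracket a b - B.bracket a c := by
  have h := B.add_right a c (b - c)
  rw [add_sub_cancel] at h
  linear_combination -h

theorem br_C_mul_right (a : R3) (c : ℂ) (g : R3) :
    B.bracket a (C c * g) = C c * B.bracket a g := by
  rw [← MvPolynomial.smul_eq_C_mul, ← MvPolynomial.smul_eq_C_mul, B.smul_right]

variable (h12 : B.bracket (X 0) (X 1) = -(X 0 * X 1))
variable (h13 : B.bracket (X 0) (X 2) = -(2 * (X 0 * X 2)))
variable (h23 : B.bracket (X 1) (X 2) = -(X 1 * X 2))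

variable (h12 : B.bracket (X 0) (X 1) = -(X 0 * X 1))
variable (h13 : B.bracket (X 0) (X 2) = -(2 * (X 0 * X 2)))
variable (h23 : B.bracket (X 1) (X 2) = -(X 1 * X 2))

include h12 h13 in
theorem br_X0 (f : R3) :
    B.bracket (X 0) f = -(X 0 * (X 1 * pderiv 1 f + 2 * (X 2 * pderiv 2 f))) := by
  induction f using MvPolynomial.induction_on with
  | C a => simp [br_C_right]
  | add p q hp hq => rw [B.add_right, hp, hq]; simp only [map_add]; ring
  | mul_X p i hp =>
      fin_cases i
      · show B.bracket (X 0) (p * X 0) = -(X 0 * (X 1 * pderiv 1 (p * X 0) + 2 * (X 2 * pderiv 2 (p * X 0))))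
        rw [B.leibniz, hp, br_self]
        simp only [pderiv_mul, pderiv_X_self,
          pderiv_X_of_ne (show (0:Fin 3) ≠ 1 by decide), pderiv_X_of_ne (show (0:Fin 3) ≠ 2 by decide),
          pderiv_X_of_ne (show (1:Fin 3) ≠ 0 by decide), pderiv_X_of_ne (show (1:Fin 3) ≠ 2 by decide),
          pderiv_X_of_ne (show (2:Fin 3) ≠ 0 by decide), pderiv_X_of_ne (show (2:Fin 3) ≠ 1 by decide)]
        ring
      · show B.bracket (X 0) (p * X 1) = -(X 0 * (X 1 * pderiv 1 (p * X 1) + 2 * (X 2 * pderiv 2 (p * X 1))))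
        rw [B.leibniz, hp, h12]
        simp only [pderiv_mul, pderiv_X_self,
          pderiv_X_of_ne (show (0:Fin 3) ≠ 1 by decide), pderiv_X_of_ne (show (0:Fin 3) ≠ 2 by decide),
          pderiv_X_of_ne (show (1:Fin 3) ≠ 0 by decide), pderiv_X_of_ne (show (1:Fin 3) ≠ 2 by decide),
          pderiv_X_of_ne (show (2:Fin 3) ≠ 0 by decide), pderiv_X_of_ne (show (2:Fin 3) ≠ 1 by decide)]
        ring
      · show B.bracket (X 0) (p * X 2) = -(X 0 * (X 1 * pderiv 1 (p * X 2) + 2 * (X 2 * pderiv 2 (p * X 2))))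
        rw [B.leibniz, hp, h13]
        simp only [pderiv_mul, pderiv_X_self,
          pderiv_X_of_ne (show (0:Fin 3) ≠ 1 by decide), pderiv_X_of_ne (show (0:Fin 3) ≠ 2 by decide),
          pderiv_X_of_ne (show (1:Fin 3) ≠ 0 by decide), pderiv_X_of_ne (show (1:Fin 3) ≠ 2 by decide),
          pderiv_X_of_ne (show (2:Fin 3) ≠ 0 by decide), pderiv_X_of_ne (show (2:Fin 3) ≠ 1 by decide)]
        ring

include h12 h23 in
theorem br_X1 (f : R3) :
    B.bracket (X 1) f = X 1 * (X 0 * pderiv 0 f - X 2 * pderiv 2 f) := by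
  induction f using MvPolynomial.induction_on with
  | C a => simp [br_C_right]
  | add p q hp hq => rw [B.add_right, hp, hq]; simp only [map_add]; ring
  | mul_X p i hp =>
      fin_cases i
      · show B.bracket (X 1) (p * X 0) = X 1 * (X 0 * pderiv 0 (p * X 0) - X 2 * pderiv 2 (p * X 0))
        rw [B.leibniz, hp, B.antisymm (X 1) (X 0), h12]
        simp only [pderiv_mul, pderiv_X_self,
          pderiv_X_of_ne (show (0:Fin 3) ≠ 1 by decide), pderiv_X_of_ne (show (0:Fin 3) ≠ 2 by decide),
          pderiv_X_of_ne (show (1:Fin 3) ≠ 0 by decide), pderiv_X_of_ne (show (1:Fin 3) ≠ 2 by decide),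
          pderiv_X_of_ne (show (2:Fin 3) ≠ 0 by decide), pderiv_X_of_ne (show (2:Fin 3) ≠ 1 by decide)]
        ring
      · show B.bracket (X 1) (p * X 1) = X 1 * (X 0 * pderiv 0 (p * X 1) - X 2 * pderiv 2 (p * X 1))
        rw [B.leibniz, hp, br_self]
        simp only [pderiv_mul, pderiv_X_self,
          pderiv_X_of_ne (show (0:Fin 3) ≠ 1 by decide), pderiv_X_of_ne (show (0:Fin 3) ≠ 2 by decide),
          pderiv_X_of_ne (show (1:Fin 3) ≠ 0 by decide), pderiv_X_of_ne (show (1:Fin 3) ≠ 2 by decide),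
          pderiv_X_of_ne (show (2:Fin 3) ≠ 0 by decide), pderiv_X_of_ne (show (2:Fin 3) ≠ 1 by decide)]
        ring
      · show B.bracket (X 1) (p * X 2) = X 1 * (X 0 * pderiv 0 (p * X 2) - X 2 * pderiv 2 (p * X 2))
        rw [B.leibniz, hp, h23]
        simp only [pderiv_mul, pderiv_X_self,
          pderiv_X_of_ne (show (0:Fin 3) ≠ 1 by decide), pderiv_X_of_ne (show (0:Fin 3) ≠ 2 by decide),
          pderiv_X_of_ne (show (1:Fin 3) ≠ 0 by decide), pderiv_X_of_ne (show (1:Fin 3) ≠ 2 by decide),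
          pderiv_X_of_ne (show (2:Fin 3) ≠ 0 by decide), pderiv_X_of_ne (show (2:Fin 3) ≠ 1 by decide)]
        ring

include h13 h23 in
theorem br_X2 (f : R3) :
    B.bracket (X 2) f = X 2 * (2 * (X 0 * pderiv 0 f) + X 1 * pderiv 1 f) := by
  induction f using MvPolynomial.induction_on with
  | C a => simp [br_C_right]
  | add p q hp hq => rw [B.add_right, hp, hq]; simp only [map_add]; ring
  | mul_X p i hp =>
      fin_cases i
      · show B.bracket (X 2) (p * X 0) = X 2 * (2 * (X 0 * pderiv 0 (p * X 0)) + X 1 * pderiv 1 (p * X 0))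
        rw [B.leibniz, hp, B.antisymm (X 2) (X 0), h13]
        simp only [pderiv_mul, pderiv_X_self,
          pderiv_X_of_ne (show (0:Fin 3) ≠ 1 by decide), pderiv_X_of_ne (show (0:Fin 3) ≠ 2 by decide),
          pderiv_X_of_ne (show (1:Fin 3) ≠ 0 by decide), pderiv_X_of_ne (show (1:Fin 3) ≠ 2 by decide),
          pderiv_X_of_ne (show (2:Fin 3) ≠ 0 by decide), pderiv_X_of_ne (show (2:Fin 3) ≠ 1 by decide)]
        ring
      · show B.bracket (X 2) (p * X 1) = X 2 * (2 * (X 0 * pderiv 0 (p * X 1)) + X 1 * pderiv 1 (p * X 1))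
        rw [B.leibniz, hp, B.antisymm (X 2) (X 1), h23]
        simp only [pderiv_mul, pderiv_X_self,
          pderiv_X_of_ne (show (0:Fin 3) ≠ 1 by decide), pderiv_X_of_ne (show (0:Fin 3) ≠ 2 by decide),
          pderiv_X_of_ne (show (1:Fin 3) ≠ 0 by decide), pderiv_X_of_ne (show (1:Fin 3) ≠ 2 by decide),
          pderiv_X_of_ne (show (2:Fin 3) ≠ 0 by decide), pderiv_X_of_ne (show (2:Fin 3) ≠ 1 by decide)]
        ring
      · show B.bracket (X 2) (p * X 2) = X 2 * (2 * (X 0 * pderiv 0 (p * X 2)) + X 1 * pderiv 1 (p * X 2))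
        rw [B.leibniz, hp, br_self]
        simp only [pderiv_mul, pderiv_X_self,
          pderiv_X_of_ne (show (0:Fin 3) ≠ 1 by decide), pderiv_X_of_ne (show (0:Fin 3) ≠ 2 by decide),
          pderiv_X_of_ne (show (1:Fin 3) ≠ 0 by decide), pderiv_X_of_ne (show (1:Fin 3) ≠ 2 by decide),
          pderiv_X_of_ne (show (2:Fin 3) ≠ 0 by decide), pderiv_X_of_ne (show (2:Fin 3) ≠ 1 by decide)]
        ring

end Bracket

theorem subst_mem {σ : Type*} (I : Ideal (MvPolynomial σ ℂ)) (v : σ → MvPolynomial σ ℂ)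
    (hv : ∀ i, X i - v i ∈ I) (f : MvPolynomial σ ℂ) : f - aeval v f ∈ I := by
  induction f using MvPolynomial.induction_on with
  | C a => simp [algebraMap_eq]
  | add p q hp hq =>
    have := I.add_mem hp hq
    simpa [map_add, add_sub_add_comm] using this
  | mul_X p i hp =>
    have : p * X i - aeval v (p * X i) = (p - aeval v p) * X i + aeval v p * (X i - v i) := by
      simp only [map_mul, aeval_X]; ring
    rw [this]
    exact I.add_mem (I.mul_mem_right _ hp) (I.mul_mem_left _ (hv i))

theorem spanKerPrime {σ : Type*} (S : Set (MvPolynomial σ ℂ)) (v : σ → MvPolynomial σ ℂ)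
    (h1 : ∀ g ∈ S, aeval v g = 0)
    (h2 : ∀ i, X i - v i ∈ Ideal.span S) : (Ideal.span S).IsPrime := by
  have hk : Ideal.span S = RingHom.ker
      ((aeval v : MvPolynomial σ ℂ →ₐ[ℂ] MvPolynomial σ ℂ) : MvPolynomial σ ℂ →+* MvPolynomial σ ℂ) := by
    apply le_antisymm
    · rw [Ideal.span_le]
      intro g hg
      simpa [RingHom.mem_ker] using h1 g hg
    · intro f hf
      rw [RingHom.mem_ker] at hf
      have hf' : (aeval v) f = 0 := hf
      have := subst_mem (Ideal.span S) v h2 f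
      rw [hf', sub_zero] at this
      exact this
  rw [hk]
  exact RingHom.ker_isPrime _

section Bracket2
variable (B : PoissonBracket ℂ R3)
variable (h12 : B.bracket (X 0) (X 1) = -(X 0 * X 1))
variable (h13 : B.bracket (X 0) (X 2) = -(2 * (X 0 * X 2)))
variable (h23 : B.bracket (X 1) (X 2) = -(X 1 * X 2))

section Po

variable {B}

include h12 h13 in
theorem br_right_X0 (a : R3) :
    B.bracket a (X 0) = X 0 * (X 1 * pderiv 1 a + 2 * (X 2 * pderiv 2 a)) := by
  rw [B.antisymm, br_X0 B h12 h13, neg_neg]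

include h12 h23 in
theorem br_right_X1 (a : R3) :
    B.bracket a (X 1) = -(X 1 * (X 0 * pderiv 0 a - X 2 * pderiv 2 a)) := by
  rw [B.antisymm, br_X1 B h12 h23]

include h13 h23 in
theorem br_right_X2 (a : R3) :
    B.bracket a (X 2) = -(X 2 * (2 * (X 0 * pderiv 0 a) + X 1 * pderiv 1 a)) := by
  rw [B.antisymm, br_X2 B h13 h23]

theorem isPoisson_span (S : Set R3) (hgen : ∀ a : R3, ∀ g ∈ S, B.bracket a g ∈ Ideal.span S) :
    IsPoissonIdeal B (Ideal.span S) := by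
  intro a x hx
  induction hx using Submodule.span_induction with
  | mem g hg => exact hgen a g hg
  | zero => rw [br_zero_right]; exact Ideal.zero_mem _
  | add x y hxm hym ihx ihy => rw [B.add_right]; exact Ideal.add_mem _ ihx ihy
  | smul r x hxm ih =>
      rw [smul_eq_mul, B.leibniz]
      exact Ideal.add_mem _ (Ideal.mul_mem_left _ _ hxm) (Ideal.mul_mem_left _ _ ih)

include h12 h13 h23 in
theorem po_a (α : ℂ) : IsPoissonIdeal B (Ideal.span ({X 0 - C α, X 1, X 2} : Set R3)) := by
  apply isPoisson_span
  intro a g hg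
  simp only [Set.mem_insert_iff, Set.mem_singleton_iff] at hg
  rcases hg with rfl|rfl|rfl
  · have e : B.bracket a (X 0 - C α) = (X 0 * pderiv 1 a) * X 1 + (2 * (X 0 * pderiv 2 a)) * X 2 := by
      rw [br_sub_right, br_C_right, sub_zero, br_right_X0 h12 h13]; ring
    rw [e]
    exact Ideal.add_mem _ (Ideal.mul_mem_left _ _ (Ideal.subset_span (show X 1 ∈ ({X 0 - C α, X 1, X 2} : Set R3) by simp)))
      (Ideal.mul_mem_left _ _ (Ideal.subset_span (show X 2 ∈ ({X 0 - C α, X 1, X 2} : Set R3) by simp)))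
  · have e : B.bracket a (X 1) = (-(X 0 * pderiv 0 a - X 2 * pderiv 2 a)) * X 1 := by
      rw [br_right_X1 h12 h23]; ring
    rw [e]
    exact Ideal.mul_mem_left _ _ (Ideal.subset_span (show X 1 ∈ ({X 0 - C α, X 1, X 2} : Set R3) by simp))
  · have e : B.bracket a (X 2) = (-(2 * (X 0 * pderiv 0 a) + X 1 * pderiv 1 a)) * X 2 := by
      rw [br_right_X2 h13 h23]; ring
    rw [e]
    exact Ideal.mul_mem_left _ _ (Ideal.subset_span (show X 2 ∈ ({X 0 - C α, X 1, X 2} : Set R3) by simp))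

include h12 h13 h23 in
theorem po_b (β : ℂ) : IsPoissonIdeal B (Ideal.span ({X 0, X 1 - C β, X 2} : Set R3)) := by
  apply isPoisson_span
  intro a g hg
  simp only [Set.mem_insert_iff, Set.mem_singleton_iff] at hg
  rcases hg with rfl|rfl|rfl
  · have e : B.bracket a (X 0) = (X 1 * pderiv 1 a + 2 * (X 2 * pderiv 2 a)) * X 0 := by
      rw [br_right_X0 h12 h13]; ring
    rw [e]
    exact Ideal.mul_mem_left _ _ (Ideal.subset_span (show X 0 ∈ ({X 0, X 1 - C β, X 2} : Set R3) by simp))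
  · have e : B.bracket a (X 1 - C β) = (-(X 1 * pderiv 0 a)) * X 0 + (X 1 * pderiv 2 a) * X 2 := by
      rw [br_sub_right, br_C_right, sub_zero, br_right_X1 h12 h23]; ring
    rw [e]
    exact Ideal.add_mem _ (Ideal.mul_mem_left _ _ (Ideal.subset_span (show X 0 ∈ ({X 0, X 1 - C β, X 2} : Set R3) by simp)))
      (Ideal.mul_mem_left _ _ (Ideal.subset_span (show X 2 ∈ ({X 0, X 1 - C β, X 2} : Set R3) by simp)))
  · have e : B.bracket a (X 2) = (-(2 * (X 0 * pderiv 0 a) + X 1 * pderiv 1 a)) * X 2 := by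
      rw [br_right_X2 h13 h23]; ring
    rw [e]
    exact Ideal.mul_mem_left _ _ (Ideal.subset_span (show X 2 ∈ ({X 0, X 1 - C β, X 2} : Set R3) by simp))

include h12 h13 h23 in
theorem po_c (γ : ℂ) : IsPoissonIdeal B (Ideal.span ({X 0, X 1, X 2 - C γ} : Set R3)) := by
  apply isPoisson_span
  intro a g hg
  simp only [Set.mem_insert_iff, Set.mem_singleton_iff] at hg
  rcases hg with rfl|rfl|rfl
  · have e : B.bracket a (X 0) = (X 1 * pderiv 1 a + 2 * (X 2 * pderiv 2 a)) * X 0 := by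
      rw [br_right_X0 h12 h13]; ring
    rw [e]
    exact Ideal.mul_mem_left _ _ (Ideal.subset_span (show X 0 ∈ ({X 0, X 1, X 2 - C γ} : Set R3) by simp))
  · have e : B.bracket a (X 1) = (-(X 0 * pderiv 0 a - X 2 * pderiv 2 a)) * X 1 := by
      rw [br_right_X1 h12 h23]; ring
    rw [e]
    exact Ideal.mul_mem_left _ _ (Ideal.subset_span (show X 1 ∈ ({X 0, X 1, X 2 - C γ} : Set R3) by simp))
  · have e : B.bracket a (X 2 - C γ) = (-(2 * (X 2 * pderiv 0 a))) * X 0 + (-(X 2 * pderiv 1 a)) * X 1 := by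
      rw [br_sub_right, br_C_right, sub_zero, br_right_X2 h13 h23]; ring
    rw [e]
    exact Ideal.add_mem _ (Ideal.mul_mem_left _ _ (Ideal.subset_span (show X 0 ∈ ({X 0, X 1, X 2 - C γ} : Set R3) by simp)))
      (Ideal.mul_mem_left _ _ (Ideal.subset_span (show X 1 ∈ ({X 0, X 1, X 2 - C γ} : Set R3) by simp)))

include h12 h13 h23 in
theorem po_01  : IsPoissonIdeal B (Ideal.span ({X 0, X 1} : Set R3)) := by
  apply isPoisson_span
  intro a g hg
  simp only [Set.mem_insert_iff, Set.mem_singleton_iff] at hg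
  rcases hg with rfl|rfl
  · have e : B.bracket a (X 0) = (X 1 * pderiv 1 a + 2 * (X 2 * pderiv 2 a)) * X 0 := by
      rw [br_right_X0 h12 h13]; ring
    rw [e]
    exact Ideal.mul_mem_left _ _ (Ideal.subset_span (show X 0 ∈ ({X 0, X 1} : Set R3) by simp))
  · have e : B.bracket a (X 1) = (-(X 0 * pderiv 0 a - X 2 * pderiv 2 a)) * X 1 := by
      rw [br_right_X1 h12 h23]; ring
    rw [e]
    exact Ideal.mul_mem_left _ _ (Ideal.subset_span (show X 1 ∈ ({X 0, X 1} : Set R3) by simp))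

include h12 h13 h23 in
theorem po_02  : IsPoissonIdeal B (Ideal.span ({X 0, X 2} : Set R3)) := by
  apply isPoisson_span
  intro a g hg
  simp only [Set.mem_insert_iff, Set.mem_singleton_iff] at hg
  rcases hg with rfl|rfl
  · have e : B.bracket a (X 0) = (X 1 * pderiv 1 a + 2 * (X 2 * pderiv 2 a)) * X 0 := by
      rw [br_right_X0 h12 h13]; ring
    rw [e]
    exact Ideal.mul_mem_left _ _ (Ideal.subset_span (show X 0 ∈ ({X 0, X 2} : Set R3) by simp))
  · have e : B.bracket a (X 2) = (-(2 * (X 0 * pderiv 0 a) + X 1 * pderiv 1 a)) * X 2 := by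
      rw [br_right_X2 h13 h23]; ring
    rw [e]
    exact Ideal.mul_mem_left _ _ (Ideal.subset_span (show X 2 ∈ ({X 0, X 2} : Set R3) by simp))

include h12 h13 h23 in
theorem po_12  : IsPoissonIdeal B (Ideal.span ({X 1, X 2} : Set R3)) := by
  apply isPoisson_span
  intro a g hg
  simp only [Set.mem_insert_iff, Set.mem_singleton_iff] at hg
  rcases hg with rfl|rfl
  · have e : B.bracket a (X 1) = (-(X 0 * pderiv 0 a - X 2 * pderiv 2 a)) * X 1 := by
      rw [br_right_X1 h12 h23]; ring
    rw [e]
    exact Ideal.mul_mem_left _ _ (Ideal.subset_span (show X 1 ∈ ({X 1, X 2} : Set R3) by simp))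
  · have e : B.bracket a (X 2) = (-(2 * (X 0 * pderiv 0 a) + X 1 * pderiv 1 a)) * X 2 := by
      rw [br_right_X2 h13 h23]; ring
    rw [e]
    exact Ideal.mul_mem_left _ _ (Ideal.subset_span (show X 2 ∈ ({X 1, X 2} : Set R3) by simp))

include h12 h13 h23 in
theorem po_0 : IsPoissonIdeal B (Ideal.span {(X 0 : R3)}) := by
  apply isPoisson_span
  intro a g hg
  simp only [Set.mem_singleton_iff] at hg
  subst hg
  have e : B.bracket a (X 0) = (X 1 * pderiv 1 a + 2 * (X 2 * pderiv 2 a)) * X 0 := by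
    rw [br_right_X0 h12 h13]; ring
  rw [e]
  exact Ideal.mul_mem_left _ _ (Ideal.subset_span (by simp))

include h12 h13 h23 in
theorem po_1 : IsPoissonIdeal B (Ideal.span {(X 1 : R3)}) := by
  apply isPoisson_span
  intro a g hg
  simp only [Set.mem_singleton_iff] at hg
  subst hg
  have e : B.bracket a (X 1) = (-(X 0 * pderiv 0 a - X 2 * pderiv 2 a)) * X 1 := by
    rw [br_right_X1 h12 h23]; ring
  rw [e]
  exact Ideal.mul_mem_left _ _ (Ideal.subset_span (by simp))

include h12 h13 h23 in
theorem po_2 : IsPoissonIdeal B (Ideal.span {(X 2 : R3)}) := by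
  apply isPoisson_span
  intro a g hg
  simp only [Set.mem_singleton_iff] at hg
  subst hg
  have e : B.bracket a (X 2) = (-(2 * (X 0 * pderiv 0 a) + X 1 * pderiv 1 a)) * X 2 := by
    rw [br_right_X2 h13 h23]; ring
  rw [e]
  exact Ideal.mul_mem_left _ _ (Ideal.subset_span (by simp))

include h12 h13 h23 in
theorem po_f (l : ℂ) :
    IsPoissonIdeal B (Ideal.span {(X 0 * X 2 - C l * X 1 ^ 2 : R3)}) := by
  apply isPoisson_span
  intro a g hg
  simp only [Set.mem_singleton_iff] at hg
  subst hg
  have e : B.bracket a (X 0 * X 2 - C l * X 1 ^ 2) =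
      (-2 * (X 0 * pderiv 0 a - X 2 * pderiv 2 a)) * (X 0 * X 2 - C l * X 1 ^ 2) := by
    rw [br_sub_right, B.leibniz, br_C_mul_right, pow_two, B.leibniz,
      br_right_X0 h12 h13, br_right_X1 h12 h23, br_right_X2 h13 h23]
    ring
  rw [e]
  exact Ideal.mul_mem_left _ _ (Ideal.subset_span (by simp))

include h12 h13 in
theorem stabE1 {Q : Ideal R3} (hQ : Q.IsPrime) (hPo : IsPoissonIdeal B Q) (h0 : X 0 ∉ Q)
    {f : R3} (hf : f ∈ Q) : X 1 * pderiv 1 f + 2 * (X 2 * pderiv 2 f) ∈ Q := by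
  have h := hPo (X 0) f hf
  rw [br_X0 B h12 h13] at h
  have h' := Q.neg_mem h
  rw [neg_neg] at h'
  rcases hQ.mem_or_mem h' with h | h
  · exact absurd h h0
  · exact h

include h12 h23 in
theorem stabW {Q : Ideal R3} (hQ : Q.IsPrime) (hPo : IsPoissonIdeal B Q) (h1 : X 1 ∉ Q)
    {f : R3} (hf : f ∈ Q) : X 0 * pderiv 0 f - X 2 * pderiv 2 f ∈ Q := by
  have h := hPo (X 1) f hf
  rw [br_X1 B h12 h23] at h
  rcases hQ.mem_or_mem h with h | h
  · exact absurd h h1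
  · exact h

include h13 h23 in
theorem stabE2 {Q : Ideal R3} (hQ : Q.IsPrime) (hPo : IsPoissonIdeal B Q) (h2 : X 2 ∉ Q)
    {f : R3} (hf : f ∈ Q) : 2 * (X 0 * pderiv 0 f) + X 1 * pderiv 1 f ∈ Q := by
  have h := hPo (X 2) f hf
  rw [br_X2 B h13 h23] at h
  rcases hQ.mem_or_mem h with h | h
  · exact absurd h h2
  · exact h

end Po

end Bracket2
section Primes

theorem prime_span_a (α : ℂ) : (Ideal.span ({X 0 - C α, X 1, X 2} : Set R3)).IsPrime := by
  apply spanKerPrime _ ![C α, 0, 0]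
  · intro g hg
    simp only [Set.mem_insert_iff, Set.mem_singleton_iff] at hg
    rcases hg with rfl | rfl | rfl <;> simp [algebraMap_eq]
  · intro i
    fin_cases i <;> simp <;> exact Ideal.subset_span (by simp)

theorem prime_span_b (β : ℂ) : (Ideal.span ({X 0, X 1 - C β, X 2} : Set R3)).IsPrime := by
  apply spanKerPrime _ ![0, C β, 0]
  · intro g hg
    simp only [Set.mem_insert_iff, Set.mem_singleton_iff] at hg
    rcases hg with rfl | rfl | rfl <;> simp [algebraMap_eq]
  · intro i
    fin_cases i <;> simp <;> exact Ideal.subset_span (by simp)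

theorem prime_span_c (γ : ℂ) : (Ideal.span ({X 0, X 1, X 2 - C γ} : Set R3)).IsPrime := by
  apply spanKerPrime _ ![0, 0, C γ]
  · intro g hg
    simp only [Set.mem_insert_iff, Set.mem_singleton_iff] at hg
    rcases hg with rfl | rfl | rfl <;> simp [algebraMap_eq]
  · intro i
    fin_cases i <;> simp <;> exact Ideal.subset_span (by simp)

theorem prime_span_01 : (Ideal.span ({X 0, X 1} : Set R3)).IsPrime := by
  apply spanKerPrime _ ![0, 0, X 2]
  · intro g hg
    simp only [Set.mem_insert_iff, Set.mem_singleton_iff] at hg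
    rcases hg with rfl | rfl <;> simp
  · intro i
    fin_cases i <;> simp <;> exact Ideal.subset_span (by simp)

theorem prime_span_02 : (Ideal.span ({X 0, X 2} : Set R3)).IsPrime := by
  apply spanKerPrime _ ![0, X 1, 0]
  · intro g hg
    simp only [Set.mem_insert_iff, Set.mem_singleton_iff] at hg
    rcases hg with rfl | rfl <;> simp
  · intro i
    fin_cases i <;> simp <;> exact Ideal.subset_span (by simp)

theorem prime_span_12 : (Ideal.span ({X 1, X 2} : Set R3)).IsPrime := by
  apply spanKerPrime _ ![X 0, 0, 0]
  · intro g hg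
    simp only [Set.mem_insert_iff, Set.mem_singleton_iff] at hg
    rcases hg with rfl | rfl <;> simp
  · intro i
    fin_cases i <;> simp <;> exact Ideal.subset_span (by simp)

theorem prime_span_0 : (Ideal.span ({(X 0 : R3)} : Set R3)).IsPrime := by
  apply spanKerPrime _ ![0, X 1, X 2]
  · intro g hg
    simp only [Set.mem_singleton_iff] at hg
    subst hg; simp
  · intro i
    fin_cases i <;> simp <;> exact Ideal.subset_span (by simp)

theorem prime_span_1 : (Ideal.span ({(X 1 : R3)} : Set R3)).IsPrime := by
  apply spanKerPrime _ ![X 0, 0, X 2]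
  · intro g hg
    simp only [Set.mem_singleton_iff] at hg
    subst hg; simp
  · intro i
    fin_cases i <;> simp <;> exact Ideal.subset_span (by simp)

theorem prime_span_2 : (Ideal.span ({(X 2 : R3)} : Set R3)).IsPrime := by
  apply spanKerPrime _ ![X 0, X 1, 0]
  · intro g hg
    simp only [Set.mem_singleton_iff] at hg
    subst hg; simp
  · intro i
    fin_cases i <;> simp <;> exact Ideal.subset_span (by simp)

-- Prime (X 1) in two variables
theorem prime_X1_fin2 : Prime (X 1 : MvPolynomial (Fin 2) ℂ) := by
  have h : (Ideal.span ({(X 1 : MvPolynomial (Fin 2) ℂ)} : Set (MvPolynomial (Fin 2) ℂ))).IsPrime := by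
    apply spanKerPrime _ ![X 0, 0]
    · intro g hg
      simp only [Set.mem_singleton_iff] at hg
      subst hg; simp
    · intro i
      fin_cases i <;> simp <;> exact Ideal.subset_span (by simp)
  exact (Ideal.span_singleton_prime (X_ne_zero 1)).mp h

theorem lin_irred {D : Type*} [CommRing D] [IsDomain D] (a b : D) (ha : a ≠ 0)
    (h : ∀ d : D, d ∣ a → d ∣ b → IsUnit d) :
    Irreducible (Polynomial.C a * Polynomial.X + Polynomial.C b) := by
  set p := Polynomial.C a * Polynomial.X + Polynomial.C b with hp
  have hdeg : p.natDegree = 1 := Polynomial.natDegree_linear ha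
  have hp0 : p ≠ 0 := by
    intro h0
    rw [h0] at hdeg
    simp at hdeg
  constructor
  · intro hu
    have := Polynomial.natDegree_eq_zero_of_isUnit hu
    omega
  · intro q r hqr
    have hq0 : q ≠ 0 := by rintro rfl; rw [zero_mul] at hqr; exact hp0 hqr
    have hr0 : r ≠ 0 := by rintro rfl; rw [mul_zero] at hqr; exact hp0 hqr
    have hsum : q.natDegree + r.natDegree = 1 := by
      rw [← Polynomial.natDegree_mul hq0 hr0, ← hqr, hdeg]
    have hc1 : p.coeff 1 = a := by simp [hp]
    have hc0 : p.coeff 0 = b := by simp [hp]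
    rcases (show q.natDegree = 0 ∨ r.natDegree = 0 by omega) with h0 | h0
    · obtain ⟨c, hc⟩ := Polynomial.natDegree_eq_zero.mp h0
      left
      rw [← hc, Polynomial.isUnit_C]
      apply h c
      · refine ⟨r.coeff 1, ?_⟩
        rw [← hc1, hqr, ← hc, Polynomial.coeff_C_mul]
      · refine ⟨r.coeff 0, ?_⟩
        rw [← hc0, hqr, ← hc, Polynomial.coeff_C_mul]
    · obtain ⟨c, hc⟩ := Polynomial.natDegree_eq_zero.mp h0
      right
      rw [← hc, Polynomial.isUnit_C]
      apply h c
      · refine ⟨q.coeff 1, ?_⟩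
        rw [← hc1, hqr, ← hc, Polynomial.coeff_mul_C, mul_comm]
      · refine ⟨q.coeff 0, ?_⟩
        rw [← hc0, hqr, ← hc, Polynomial.coeff_mul_C, mul_comm]

theorem fquad_ne_zero (l : ℂ) : (X 0 * X 2 - C l * X 1 ^ 2 : R3) ≠ 0 := by
  intro h0
  have := congrArg (eval ![1, 0, 1]) h0
  simp at this

theorem prime_fquad (l : ℂ) (hl : l ≠ 0) : Prime (X 0 * X 2 - C l * X 1 ^ 2 : R3) := by
  apply UniqueFactorizationMonoid.irreducible_iff_prime.mp
  apply (MulEquiv.irreducible_iff (finSuccEquiv ℂ 2)).mp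
  have himg : (finSuccEquiv ℂ 2) (X 0 * X 2 - C l * X 1 ^ 2 : R3) =
      Polynomial.C (X 1 : MvPolynomial (Fin 2) ℂ) * Polynomial.X +
        Polynomial.C (-(C l * X 0 ^ 2) : MvPolynomial (Fin 2) ℂ) := by
    have e2 : (2 : Fin 3) = Fin.succ 1 := rfl
    have e1 : (1 : Fin 3) = Fin.succ 0 := rfl
    rw [map_sub, map_mul, map_mul, map_pow, e2, e1, finSuccEquiv_X_zero, finSuccEquiv_X_succ,
      finSuccEquiv_X_succ]
    have ec : (finSuccEquiv ℂ 2) (C l : R3) = Polynomial.C (C l) := by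
      rw [show (C l : R3) = algebraMap ℂ R3 l from (algebraMap_eq ℂ (Fin 3)).symm ▸ rfl]
      rw [AlgEquiv.commutes]
      rfl
    rw [ec]
    simp only [Polynomial.C_neg, Polynomial.C_mul, Polynomial.C_pow]
    ring
  rw [himg]
  apply lin_irred _ _ (X_ne_zero 1)
  intro d hd1 hd2
  obtain ⟨e, he⟩ := hd1
  rcases (prime_X1_fin2.irreducible.isUnit_or_isUnit he) with hu | hu
  · exact hu
  · exfalso
    obtain ⟨u, hu'⟩ := hu.exists_right_inv
    have hxd : (X 1 : MvPolynomial (Fin 2) ℂ) ∣ d := ⟨u, by rw [he, mul_assoc, hu', mul_one]⟩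
    have hneg : (X 1 : MvPolynomial (Fin 2) ℂ) ∣ -(C l * X 0 ^ 2) := hxd.trans hd2
    rw [dvd_neg] at hneg
    rcases prime_X1_fin2.2.2 _ _ hneg with hcl | hpow
    · obtain ⟨t, ht⟩ := hcl
      have := congrArg (eval ![0, 0]) ht
      simp at this
      exact hl this
    · have hx0 : (X 1 : MvPolynomial (Fin 2) ℂ) ∣ X 0 := prime_X1_fin2.dvd_of_dvd_pow hpow
      obtain ⟨t, ht⟩ := hx0
      have := congrArg (eval ![1, 0]) ht
      simp at this

end Primes
section Components


noncomputable def EwL (w : Fin 3 → ℕ) : R3 →ₗ[ℂ] R3 where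
  toFun f := ∑ i : Fin 3, (w i : ℂ) • (X i * pderiv i f)
  map_add' p q := by
    simp only [map_add, mul_add, smul_add]
    rw [Finset.sum_add_distrib]
  map_smul' c p := by
    simp only [RingHom.id_apply, Finset.smul_sum]
    refine Finset.sum_congr rfl fun i _ => ?_
    rw [Derivation.map_smul, mul_smul_comm, smul_comm]

theorem X_mul_pderiv_monomial (i : Fin 3) (d : Fin 3 →₀ ℕ) (c : ℂ) :
    X i * pderiv i (monomial d c) = (d i : ℂ) • monomial d c := by
  rw [pderiv_monomial]
  by_cases h : d i = 0
  · simp [h]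
  · have hd : Finsupp.single i 1 + (d - Finsupp.single i 1) = d := by
      ext j
      by_cases hj : j = i
      · subst hj
        simp only [Finsupp.add_apply, Finsupp.single_eq_same, Finsupp.tsub_apply]
        omega
      · simp [Finsupp.single_eq_of_ne' (Ne.symm hj)]
    rw [X, monomial_mul, hd, one_mul, smul_monomial, smul_eq_mul, mul_comm]

theorem EwL_monomial (w : Fin 3 → ℕ) (d : Fin 3 →₀ ℕ) (c : ℂ) :
    EwL w (monomial d c) = ((Finsupp.weight w d : ℕ) : ℂ) • monomial d c := by
  show (∑ i : Fin 3, (w i : ℂ) • (X i * pderiv i (monomial d c))) = _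
  have : ∀ i : Fin 3, (w i : ℂ) • (X i * pderiv i (monomial d c))
      = ((d i * w i : ℕ) : ℂ) • monomial d c := by
    intro i
    rw [X_mul_pderiv_monomial, smul_smul, Nat.cast_mul, mul_comm]
  rw [Finset.sum_congr rfl (fun i _ => this i), ← Finset.sum_smul]
  congr 1
  rw [Finsupp.weight_apply, Finsupp.sum_fintype]
  · rw [← Nat.cast_sum]
    congr 1
  · intro i; simp

theorem coeff_EwL (w : Fin 3 → ℕ) (f : R3) (d : Fin 3 →₀ ℕ) :
    coeff d (EwL w f) = ((Finsupp.weight w d : ℕ) : ℂ) * coeff d f := by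
  have expand : EwL w f = ∑ d' ∈ f.support, ((Finsupp.weight w d' : ℕ) : ℂ) • monomial d' (coeff d' f) := by
    conv_lhs => rw [← support_sum_monomial_coeff f]
    rw [map_sum]
    exact Finset.sum_congr rfl fun d' _ => EwL_monomial w d' (coeff d' f)
  rw [expand, coeff_sum]
  simp only [coeff_smul, coeff_monomial, smul_eq_mul]
  rw [Finset.sum_eq_single d]
  · simp
  · intro d' _ hne
    simp [if_neg hne]
  · intro hd
    rw [MvPolynomial.notMem_support_iff.mp hd]
    simp

theorem sum_comp (w : Fin 3 → ℕ) (f : R3) (N : ℕ)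
    (h : ∀ d ∈ f.support, Finsupp.weight w d ≤ N) :
    ∑ m ∈ Finset.range (N + 1), weightedHomogeneousComponent w m f = f := by
  apply MvPolynomial.ext
  intro d
  rw [coeff_sum]
  simp only [coeff_weightedHomogeneousComponent]
  rw [Finset.sum_ite_eq]
  by_cases h0 : coeff d f = 0
  · split_ifs <;> simp [h0]
  · rw [if_pos]
    rw [Finset.mem_range]
    have := h d (MvPolynomial.mem_support_iff.mpr h0)
    omega

theorem comp_support_weight {w : Fin 3 → ℕ} {n : ℕ} {f : R3} {d : Fin 3 →₀ ℕ}
    (hd : d ∈ (weightedHomogeneousComponent w n f).support) : Finsupp.weight w d = n :=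
  weightedHomogeneousComponent_isWeightedHomogeneous n f (MvPolynomial.mem_support_iff.mp hd)

theorem comp_support_subset {w : Fin 3 → ℕ} {n : ℕ} {f : R3} {d : Fin 3 →₀ ℕ}
    (hd : d ∈ (weightedHomogeneousComponent w n f).support) : d ∈ f.support := by
  classical
  rw [MvPolynomial.mem_support_iff] at hd ⊢
  rw [coeff_weightedHomogeneousComponent] at hd
  intro h0
  apply hd
  split_ifs <;> simp [h0]

theorem comp_mem {Q : Ideal R3} {w : Fin 3 → ℕ}
    (hstab : ∀ f ∈ Q, EwL w f ∈ Q) :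
    ∀ N : ℕ, ∀ f ∈ Q, (∀ d ∈ f.support, Finsupp.weight w d ≤ N) →
      ∀ n : ℕ, weightedHomogeneousComponent w n f ∈ Q := by
  intro N
  induction N with
  | zero =>
      intro f hf hb n
      by_cases hn : n = 0
      · subst hn
        have hh : IsWeightedHomogeneous w f 0 := by
          intro d hd
          exact Nat.le_zero.mp (hb d (MvPolynomial.mem_support_iff.mpr hd))
        rw [hh.weightedHomogeneousComponent_same]
        exact hf
      · rw [weightedHomogeneousComponent_eq_zero']
        · exact Q.zero_mem
        · intro d hd
          have := hb d hd
          omega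
  | succ N ih =>
      intro f hf hb n
      set g : R3 := EwL w f - (((N + 1 : ℕ) : ℂ)) • f with hg
      have hgQ : g ∈ Q := by
        apply Q.sub_mem (hstab f hf)
        rw [MvPolynomial.smul_eq_C_mul]
        exact Q.mul_mem_left _ hf
      have hcg : ∀ d, coeff d g = (((Finsupp.weight w d : ℕ) : ℂ) - ((N + 1 : ℕ) : ℂ)) * coeff d f := by
        intro d
        rw [hg, coeff_sub, coeff_EwL, coeff_smul, smul_eq_mul]
        ring
      have hgb : ∀ d ∈ g.support, Finsupp.weight w d ≤ N := by
        intro d hd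
        rw [MvPolynomial.mem_support_iff, hcg d] at hd
        have hdf : coeff d f ≠ 0 := by
          intro h0; apply hd; rw [h0, mul_zero]
        have h1 : Finsupp.weight w d ≤ N + 1 := hb d (MvPolynomial.mem_support_iff.mpr hdf)
        have h2 : ((Finsupp.weight w d : ℕ) : ℂ) ≠ ((N + 1 : ℕ) : ℂ) := by
          intro heq; apply hd; rw [heq]; ring
        have h3 : Finsupp.weight w d ≠ N + 1 := fun hh => h2 (by rw [hh])
        omega
      have ihg := ih g hgQ hgb
      have hcomp : ∀ m : ℕ, weightedHomogeneousComponent w m g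
          = (((m : ℕ) : ℂ) - ((N + 1 : ℕ) : ℂ)) • weightedHomogeneousComponent w m f := by
        intro m
        classical
        apply MvPolynomial.ext
        intro d
        rw [coeff_smul, coeff_weightedHomogeneousComponent, coeff_weightedHomogeneousComponent,
          hcg d]
        split_ifs with hw
        · rw [hw]; simp
        · simp
      have hsmall : ∀ m : ℕ, m ≤ N → weightedHomogeneousComponent w m f ∈ Q := by
        intro m hm
        have hco := hcomp m
        have hne : (((m : ℕ) : ℂ) - ((N + 1 : ℕ) : ℂ)) ≠ 0 := by
          rw [sub_ne_zero]
          intro heq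
          have : m = N + 1 := Nat.cast_injective heq
          omega
        have : weightedHomogeneousComponent w m f
            = (((m : ℕ) : ℂ) - ((N + 1 : ℕ) : ℂ))⁻¹ • weightedHomogeneousComponent w m g := by
          rw [hco, smul_smul, inv_mul_cancel₀ hne, one_smul]
        rw [this, MvPolynomial.smul_eq_C_mul]
        exact Q.mul_mem_left _ (ihg m)
      by_cases hn : n ≤ N
      · exact hsmall n hn
      · by_cases hn2 : n = N + 1
        · subst hn2
          have hsum := sum_comp w f (N + 1) hb
          rw [Finset.sum_range_succ] at hsum
          have heq : weightedHomogeneousComponent w (N + 1) f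
              = f - ∑ m ∈ Finset.range (N + 1), weightedHomogeneousComponent w m f :=
            eq_sub_of_add_eq' hsum
          rw [heq]
          apply Q.sub_mem hf
          apply Ideal.sum_mem
          intro m hm
          exact hsmall m (by simpa [Nat.lt_succ_iff] using Finset.mem_range.mp hm)
        · rw [weightedHomogeneousComponent_eq_zero']
          · exact Q.zero_mem
          · intro d hd
            have := hb d hd
            omega

theorem comp_mem' {Q : Ideal R3} {w : Fin 3 → ℕ}
    (hstab : ∀ f ∈ Q, EwL w f ∈ Q) {f : R3} (hf : f ∈ Q) (n : ℕ) :
    weightedHomogeneousComponent w n f ∈ Q :=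
  comp_mem hstab (weightedTotalDegree w f) f hf
    (fun _ hd => le_weightedTotalDegree w hd) n

end Components
section Fact

def w1 : Fin 3 → ℕ := ![0, 1, 2]
def w2 : Fin 3 → ℕ := ![2, 1, 0]

theorem weight_eval (w : Fin 3 → ℕ) (d : Fin 3 →₀ ℕ) :
    Finsupp.weight w d = d 0 * w 0 + d 1 * w 1 + d 2 * w 2 := by
  rw [Finsupp.weight_apply, Finsupp.sum_fintype _ _ (fun i => by simp)]
  rw [Fin.sum_univ_three]
  simp [mul_comm]

theorem weight_w1 (d : Fin 3 →₀ ℕ) : Finsupp.weight w1 d = d 1 + 2 * d 2 := by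
  rw [weight_eval]; simp [w1]; ring

theorem weight_w2 (d : Fin 3 →₀ ℕ) : Finsupp.weight w2 d = 2 * d 0 + d 1 := by
  rw [weight_eval]; simp [w2]; ring

theorem single_add_sub (i : Fin 3) (d : Fin 3 →₀ ℕ) (h : d i ≠ 0) :
    Finsupp.single i 1 + (d - Finsupp.single i 1) = d := by
  ext j
  by_cases hj : j = i
  · subst hj
    simp only [Finsupp.add_apply, Finsupp.single_eq_same, Finsupp.tsub_apply]
    omega
  · simp [Finsupp.single_eq_of_ne' (Ne.symm hj)]

theorem X_dvd_of_support (i : Fin 3) (h : R3) (hs : ∀ d ∈ h.support, d i ≠ 0) : X i ∣ h := by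
  rw [← support_sum_monomial_coeff h]
  apply Finset.dvd_sum
  intro d hd
  refine ⟨monomial (d - Finsupp.single i 1) (coeff d h), ?_⟩
  rw [X, monomial_mul, one_mul, single_add_sub i d (hs d hd)]

theorem mem_support_X_mul (i : Fin 3) (h' : R3) (e : Fin 3 →₀ ℕ) (he : e ∈ h'.support) :
    Finsupp.single i 1 + e ∈ (X i * h').support := by
  rw [MvPolynomial.mem_support_iff, coeff_X_mul]
  exact MvPolynomial.mem_support_iff.mp he

theorem weight_single_add (w : Fin 3 → ℕ) (i : Fin 3) (e : Fin 3 →₀ ℕ) :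
    Finsupp.weight w (Finsupp.single i 1 + e) = w i + Finsupp.weight w e := by
  rw [map_add]
  congr 1
  rw [Finsupp.weight_apply, Finsupp.sum_single_index] <;> simp

/-- The exponent pattern `(a, 2(s-a), a)`. -/
noncomputable def msupp (s a : ℕ) : Fin 3 →₀ ℕ :=
  Finsupp.single 0 a + Finsupp.single 1 (2 * (s - a)) + Finsupp.single 2 a

theorem msupp_apply0 (s a : ℕ) : msupp s a 0 = a := by
  simp [msupp, Finsupp.single_apply]

theorem msupp_apply1 (s a : ℕ) : msupp s a 1 = 2 * (s - a) := by
  simp [msupp, Finsupp.single_apply]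

theorem msupp_apply2 (s a : ℕ) : msupp s a 2 = a := by
  simp [msupp, Finsupp.single_apply]

theorem msupp_succ_shift (s a : ℕ) (ha : a ≤ s) :
    msupp (s + 1) (a + 1) = (Finsupp.single 0 1 + Finsupp.single 2 1) + msupp s a := by
  ext j
  fin_cases j <;>
    simp [msupp, Finsupp.single_apply, Finsupp.add_apply] <;> omega

theorem msupp_succ_same (s a : ℕ) (ha : a ≤ s) :
    msupp (s + 1) a = Finsupp.single 1 2 + msupp s a := by
  ext j
  fin_cases j <;>
    simp [msupp, Finsupp.single_apply, Finsupp.add_apply] <;> omega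

noncomputable def Psi (s : ℕ) (q : Polynomial ℂ) : R3 :=
  ∑ a ∈ Finset.range (s + 1), monomial (msupp s a) (q.coeff a)

theorem psi_factor (s : ℕ) (r : Polynomial ℂ) (z : ℂ) (hr : r.natDegree ≤ s) :
    Psi (s + 1) ((Polynomial.X - Polynomial.C z) * r) = (X 0 * X 2 - C z * X 1 ^ 2) * Psi s r := by
  have hcoeff : ∀ a : ℕ, ((Polynomial.X - Polynomial.C z) * r).coeff a
      = (Polynomial.X * r).coeff a - z * r.coeff a := by
    intro a
    rw [sub_mul, Polynomial.coeff_sub, Polynomial.coeff_C_mul]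
  have split : Psi (s + 1) ((Polynomial.X - Polynomial.C z) * r)
      = (∑ a ∈ Finset.range (s + 2), monomial (msupp (s+1) a) ((Polynomial.X * r).coeff a))
        - ∑ a ∈ Finset.range (s + 2), monomial (msupp (s+1) a) (z * r.coeff a) := by
    rw [Psi, ← Finset.sum_sub_distrib]
    refine Finset.sum_congr rfl fun a _ => ?_
    rw [hcoeff, map_sub]
  have sum1 : (∑ a ∈ Finset.range (s + 2), monomial (msupp (s+1) a) ((Polynomial.X * r).coeff a))
      = ∑ a ∈ Finset.range (s + 1), monomial (msupp (s+1) (a+1)) (r.coeff a) := by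
    rw [Finset.sum_range_succ']
    simp only [Polynomial.coeff_X_mul]
    have h0 : (Polynomial.X * r).coeff 0 = 0 := by
      rw [Polynomial.mul_coeff_zero, Polynomial.coeff_X_zero, zero_mul]
    rw [h0, map_zero, add_zero]
  have sum2 : (∑ a ∈ Finset.range (s + 2), monomial (msupp (s+1) a) (z * r.coeff a))
      = ∑ a ∈ Finset.range (s + 1), monomial (msupp (s+1) a) (z * r.coeff a) := by
    rw [Finset.sum_range_succ]
    have h0 : r.coeff (s + 1) = 0 :=
      Polynomial.coeff_eq_zero_of_natDegree_lt (by omega)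
    rw [h0, mul_zero, map_zero, add_zero]
  rw [split, sum1, sum2, Psi, Finset.mul_sum, ← Finset.sum_sub_distrib]
  refine Finset.sum_congr rfl fun a ha => ?_
  have ha' : a ≤ s := by simpa [Nat.lt_succ_iff] using Finset.mem_range.mp ha
  rw [sub_mul, msupp_succ_shift s a ha', msupp_succ_same s a ha']
  have e1 : (X 0 * X 2 : R3) * monomial (msupp s a) (r.coeff a)
      = monomial (Finsupp.single 0 1 + Finsupp.single 2 1 + msupp s a) (r.coeff a) := by
    rw [X, X, monomial_mul, monomial_mul, one_mul, one_mul]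
  have e2 : (C z * X 1 ^ 2 : R3) * monomial (msupp s a) (r.coeff a)
      = monomial (Finsupp.single 1 2 + msupp s a) (z * r.coeff a) := by
    rw [X_pow_eq_monomial, C_mul_monomial, monomial_mul]
    congr 1
    ring
  rw [e1, e2]

theorem psi_splits : ∀ (s : ℕ) (q : Polynomial ℂ), q ≠ 0 → q.natDegree = s →
    ∃ L : Multiset ℂ, (∀ t ∈ L, q.eval t = 0) ∧
      Psi s q = C q.leadingCoeff * (L.map (fun t => X 0 * X 2 - C t * X 1 ^ 2)).prod := by
  intro s
  induction s with
  | zero =>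
      intro q hq hdeg
      refine ⟨0, by simp, ?_⟩
      rw [Psi]
      simp only [Multiset.map_zero, Multiset.prod_zero, mul_one]
      rw [Finset.sum_range_one]
      have : msupp 0 0 = 0 := by
        ext j; fin_cases j <;> simp [msupp, Finsupp.single_apply]
      rw [this, monomial_zero', Polynomial.leadingCoeff, hdeg]
  | succ s ih =>
      intro q hq hdeg
      have hdegpos : 0 < q.degree := by
        rw [Polynomial.degree_eq_natDegree hq, hdeg]
        exact_mod_cast Nat.succ_pos s
      obtain ⟨z, hz⟩ := Complex.exists_root hdegpos
      obtain ⟨r, hfac⟩ := Polynomial.dvd_iff_isRoot.mpr hz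
      have hr0 : r ≠ 0 := by
        rintro rfl
        rw [mul_zero] at hfac
        exact hq hfac
      have hdr : r.natDegree = s := by
        have := Polynomial.natDegree_mul (Polynomial.X_sub_C_ne_zero z) hr0
        rw [← hfac, hdeg, Polynomial.natDegree_X_sub_C] at this
        omega
      obtain ⟨L, hL, hPsi⟩ := ih r hr0 hdr
      refine ⟨z ::ₘ L, ?_, ?_⟩
      · intro t ht
        rcases Multiset.mem_cons.mp ht with rfl | ht
        · rw [hfac]
          simp
        · rw [hfac, Polynomial.eval_mul, hL t ht, mul_zero]
      · rw [hfac, psi_factor s r z (le_of_eq hdr), hPsi]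
        have hlc : ((Polynomial.X - Polynomial.C z) * r).leadingCoeff = r.leadingCoeff := by
          rw [Polynomial.leadingCoeff_mul]
          simp [Polynomial.monic_X_sub_C z, Polynomial.Monic.leadingCoeff]
        rw [hlc]
        rw [Multiset.map_cons, Multiset.prod_cons]
        ring

end Fact
section Fact2

theorem monosum (h : R3) (mon : ℕ → (Fin 3 →₀ ℕ)) (hinj : Function.Injective mon) (D : ℕ)
    (hsupp : ∀ d ∈ h.support, ∃ a, a ≤ D ∧ d = mon a) :
    h = ∑ a ∈ Finset.range (D + 1), monomial (mon a) (coeff (mon a) h) := by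
  have hsub : h.support ⊆ (Finset.range (D + 1)).image mon := by
    intro d hd
    obtain ⟨a, ha, rfl⟩ := hsupp d hd
    exact Finset.mem_image.mpr ⟨a, Finset.mem_range.mpr (by omega), rfl⟩
  calc h = ∑ d ∈ h.support, monomial d (coeff d h) := (support_sum_monomial_coeff h).symm
    _ = ∑ d ∈ (Finset.range (D + 1)).image mon, monomial d (coeff d h) := by
        apply Finset.sum_subset hsub
        intro d _ hd
        rw [MvPolynomial.notMem_support_iff.mp hd, map_zero]
    _ = ∑ a ∈ Finset.range (D + 1), monomial (mon a) (coeff (mon a) h) :=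
        Finset.sum_image (fun x _ y _ hxy => hinj hxy)

theorem monoexpand (a b c : ℕ) (t : ℂ) :
    (C t * X 0 ^ a * X 1 ^ b * X 2 ^ c : R3)
      = monomial (Finsupp.single 0 a + Finsupp.single 1 b + Finsupp.single 2 c) t := by
  rw [X_pow_eq_monomial, X_pow_eq_monomial, X_pow_eq_monomial, C_mul_monomial,
    monomial_mul, monomial_mul]
  simp

theorem fact_decomp : ∀ (n : ℕ) (h : R3), h ≠ 0 → ∀ u v : ℕ, u + v ≤ n →
    (∀ d ∈ h.support, Finsupp.weight w1 d = u ∧ Finsupp.weight w2 d = v) →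
    ∃ (i j k : ℕ) (c : ℂ) (L : Multiset ℂ), c ≠ 0 ∧ (∀ t ∈ L, t ≠ 0) ∧
      h = C c * X 0 ^ i * X 1 ^ j * X 2 ^ k *
        (L.map (fun t => X 0 * X 2 - C t * X 1 ^ 2)).prod := by
  intro n
  induction n with
  | zero =>
      intro h hne u v huv hb
      have hsupp0 : ∀ d ∈ h.support, d = 0 := by
        intro d hd
        have h1 := (hb d hd).1
        have h2 := (hb d hd).2
        rw [weight_w1] at h1
        rw [weight_w2] at h2
        ext j
        fin_cases j <;> simp <;> omega
      obtain ⟨d, hd⟩ := MvPolynomial.support_nonempty.mpr hne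
      have hd0 := hsupp0 d hd
      subst hd0
      have hc0 : coeff 0 h ≠ 0 := MvPolynomial.mem_support_iff.mp hd
      have hCeq : h = C (coeff 0 h) := by
        apply MvPolynomial.ext
        intro e
        rw [coeff_C]
        by_cases he : e = 0
        · subst he; simp
        · rw [if_neg (fun hh => he hh.symm)]
          by_contra hne2
          exact he (hsupp0 e (MvPolynomial.mem_support_iff.mpr hne2))
      refine ⟨0, 0, 0, coeff 0 h, 0, hc0, by simp, ?_⟩
      conv_lhs => rw [hCeq]
      simp
  | succ n ih =>
      intro h hne u v huv hb
      by_cases hx0 : ∀ d ∈ h.support, d 0 ≠ 0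
      · obtain ⟨h', rfl⟩ := X_dvd_of_support 0 h hx0
        have hne' : h' ≠ 0 := by rintro rfl; rw [mul_zero] at hne; exact hne rfl
        have hmem : ∀ e ∈ h'.support, Finsupp.weight w1 e = u ∧ Finsupp.weight w2 e + 2 = v := by
          intro e he
          have h1 := (hb _ (mem_support_X_mul 0 h' e he)).1
          have h2 := (hb _ (mem_support_X_mul 0 h' e he)).2
          rw [weight_single_add] at h1 h2
          constructor
          · rw [← h1]; simp [w1]
          · rw [← h2]; simp [w2]; omega
        obtain ⟨e0, he0⟩ := MvPolynomial.support_nonempty.mpr hne'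
        have hv2 : 2 ≤ v := by have := (hmem e0 he0).2; omega
        obtain ⟨i, j, k, c, L, hc, hL, hfac⟩ :=
          ih h' hne' u (v - 2) (by omega) (fun e he => ⟨(hmem e he).1, by have := (hmem e he).2; omega⟩)
        exact ⟨i + 1, j, k, c, L, hc, hL, by rw [hfac]; ring⟩
      by_cases hx1 : ∀ d ∈ h.support, d 1 ≠ 0
      · obtain ⟨h', rfl⟩ := X_dvd_of_support 1 h hx1
        have hne' : h' ≠ 0 := by rintro rfl; rw [mul_zero] at hne; exact hne rfl
        have hmem : ∀ e ∈ h'.support, Finsupp.weight w1 e + 1 = u ∧ Finsupp.weight w2 e + 1 = v := by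
          intro e he
          have h1 := (hb _ (mem_support_X_mul 1 h' e he)).1
          have h2 := (hb _ (mem_support_X_mul 1 h' e he)).2
          rw [weight_single_add] at h1 h2
          constructor
          · rw [← h1]; simp [w1]; omega
          · rw [← h2]; simp [w2]; omega
        obtain ⟨e0, he0⟩ := MvPolynomial.support_nonempty.mpr hne'
        have hu1 : 1 ≤ u := by have := (hmem e0 he0).1; omega
        have hv1 : 1 ≤ v := by have := (hmem e0 he0).2; omega
        obtain ⟨i, j, k, c, L, hc, hL, hfac⟩ :=
          ih h' hne' (u - 1) (v - 1) (by omega)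
            (fun e he => ⟨by have := (hmem e he).1; omega, by have := (hmem e he).2; omega⟩)
        exact ⟨i, j + 1, k, c, L, hc, hL, by rw [hfac]; ring⟩
      by_cases hx2 : ∀ d ∈ h.support, d 2 ≠ 0
      · obtain ⟨h', rfl⟩ := X_dvd_of_support 2 h hx2
        have hne' : h' ≠ 0 := by rintro rfl; rw [mul_zero] at hne; exact hne rfl
        have hmem : ∀ e ∈ h'.support, Finsupp.weight w1 e + 2 = u ∧ Finsupp.weight w2 e = v := by
          intro e he
          have h1 := (hb _ (mem_support_X_mul 2 h' e he)).1
          have h2 := (hb _ (mem_support_X_mul 2 h' e he)).2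
          rw [weight_single_add] at h1 h2
          constructor
          · rw [← h1]; simp [w1]; omega
          · rw [← h2]; simp [w2]
        obtain ⟨e0, he0⟩ := MvPolynomial.support_nonempty.mpr hne'
        have hu2 : 2 ≤ u := by have := (hmem e0 he0).1; omega
        obtain ⟨i, j, k, c, L, hc, hL, hfac⟩ :=
          ih h' hne' (u - 2) v (by omega)
            (fun e he => ⟨by have := (hmem e he).1; omega, (hmem e he).2⟩)
        exact ⟨i, j, k + 1, c, L, hc, hL, by rw [hfac]; ring⟩
      -- all three variables have a support element missing them
      push_neg at hx0 hx1 hx2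
      obtain ⟨da, hdam, hda⟩ := hx0
      obtain ⟨db, hdbm, hdb⟩ := hx1
      obtain ⟨dc, hdcm, hdc⟩ := hx2
      have hwa1 := (hb da hdam).1
      have hwa2 := (hb da hdam).2
      have hwb1 := (hb db hdbm).1
      have hwb2 := (hb db hdbm).2
      have hwc1 := (hb dc hdcm).1
      have hwc2 := (hb dc hdcm).2
      rw [weight_w1] at hwa1 hwb1 hwc1
      rw [weight_w2] at hwa2 hwb2 hwc2
      have huv' : u = v := by omega
      have hrel : ∀ d ∈ h.support, d 2 = d 0 ∧ d 1 = u - 2 * d 0 ∧ 2 * d 0 ≤ u := by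
        intro d hd
        have e1 := (hb d hd).1
        have e2 := (hb d hd).2
        rw [weight_w1] at e1
        rw [weight_w2] at e2
        refine ⟨by omega, by omega, by omega⟩
      set s : ℕ := db 0 with hs
      have hu2s : u = 2 * s := by
        have := hrel db hdbm
        omega
      have hsupp : ∀ d ∈ h.support, ∃ a, a ≤ s ∧ d = msupp s a := by
        intro d hd
        obtain ⟨r1, r2, r3⟩ := hrel d hd
        refine ⟨d 0, by omega, ?_⟩
        ext j
        fin_cases j
        · show d 0 = msupp s (d 0) 0
          rw [msupp_apply0]
        · show d 1 = msupp s (d 0) 1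
          rw [msupp_apply1]
          omega
        · show d 2 = msupp s (d 0) 2
          rw [msupp_apply2]
          omega
      have hinj : Function.Injective (msupp s) := by
        intro x y hxy
        have : (msupp s x) 0 = (msupp s y) 0 := by rw [hxy]
        rwa [msupp_apply0, msupp_apply0] at this
      have hsum := monosum h (msupp s) hinj s hsupp
      set q : Polynomial ℂ := ∑ a ∈ Finset.range (s + 1),
        Polynomial.monomial a (coeff (msupp s a) h) with hqdef
      have hqcoeff : ∀ b, b ≤ s → q.coeff b = coeff (msupp s b) h := by
        intro b hble
        rw [hqdef, Polynomial.finset_sum_coeff]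
        simp only [Polynomial.coeff_monomial]
        rw [Finset.sum_ite_eq' (Finset.range (s + 1))]
        rw [if_pos (Finset.mem_range.mpr (by omega))]
      have hqhigh : ∀ b, s < b → q.coeff b = 0 := by
        intro b hbgt
        rw [hqdef, Polynomial.finset_sum_coeff]
        simp only [Polynomial.coeff_monomial]
        rw [Finset.sum_ite_eq' (Finset.range (s + 1))]
        rw [if_neg (fun hmem => by simp at hmem; omega)]
      have hdb_eq : db = msupp s s := by
        obtain ⟨a, ha, heq⟩ := hsupp db hdbm
        have : (msupp s a) 1 = 0 := by rw [← heq]; exact hdb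
        rw [msupp_apply1] at this
        have : a = s := by omega
        rw [heq, this]
      have hqs : q.coeff s ≠ 0 := by
        rw [hqcoeff s le_rfl, ← hdb_eq]
        exact MvPolynomial.mem_support_iff.mp hdbm
      have hda_eq : da = msupp s 0 := by
        obtain ⟨a, ha, heq⟩ := hsupp da hdam
        have : (msupp s a) 0 = 0 := by rw [← heq]; exact hda
        rw [msupp_apply0] at this
        rw [heq, this]
      have hq0 : q.coeff 0 ≠ 0 := by
        rw [hqcoeff 0 (by omega), ← hda_eq]
        exact MvPolynomial.mem_support_iff.mp hdam
      have hqne : q ≠ 0 := fun h0 => hqs (by rw [h0, Polynomial.coeff_zero])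
      have hqdeg : q.natDegree = s :=
        le_antisymm (Polynomial.natDegree_le_iff_coeff_eq_zero.mpr fun m hm => hqhigh m hm)
          (Polynomial.le_natDegree_of_ne_zero hqs)
      have hPsi : h = Psi s q := by
        rw [hsum, Psi]
        refine Finset.sum_congr rfl fun a ha => ?_
        rw [hqcoeff a (by simpa [Nat.lt_succ_iff] using Finset.mem_range.mp ha)]
      obtain ⟨L, hLroot, hfac⟩ := psi_splits s q hqne hqdeg
      refine ⟨0, 0, 0, q.leadingCoeff, L, Polynomial.leadingCoeff_ne_zero.mpr hqne, ?_, ?_⟩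
      · intro t ht
        intro ht0
        subst ht0
        have := hLroot 0 ht
        rw [← Polynomial.coeff_zero_eq_eval_zero] at this
        exact hq0 this
      · rw [hPsi, hfac]; ring

end Fact2
section Reduce

theorem uniroot {Q : Ideal R3} (hQ : Q.IsPrime) (i : Fin 3) :
    ∀ n : ℕ, ∀ P : Polynomial ℂ, P.natDegree ≤ n → P ≠ 0 →
      Polynomial.aeval (X i : R3) P ∈ Q → ∃ γ : ℂ, P.eval γ = 0 ∧ X i - C γ ∈ Q := by
  intro n
  induction n with
  | zero =>
      intro P hdeg hne hmem
      exfalso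
      have hPC := Polynomial.eq_C_of_natDegree_eq_zero (Nat.le_zero.mp hdeg)
      rw [hPC] at hmem hne
      rw [Polynomial.aeval_C] at hmem
      have hc : P.coeff 0 ≠ 0 := fun h0 => hne (by rw [h0, map_zero])
      have hu : IsUnit (algebraMap ℂ R3 (P.coeff 0)) := (hc.isUnit).map (algebraMap ℂ R3)
      exact hQ.ne_top (Q.eq_top_of_isUnit_mem hmem hu)
  | succ n ihn =>
      intro P hdeg hne hmem
      by_cases h0 : P.natDegree = 0
      · exfalso
        have hPC := Polynomial.eq_C_of_natDegree_eq_zero h0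
        rw [hPC] at hmem hne
        rw [Polynomial.aeval_C] at hmem
        have hc : P.coeff 0 ≠ 0 := fun hh => hne (by rw [hh, map_zero])
        have hu : IsUnit (algebraMap ℂ R3 (P.coeff 0)) := (hc.isUnit).map (algebraMap ℂ R3)
        exact hQ.ne_top (Q.eq_top_of_isUnit_mem hmem hu)
      · have hdegpos : 0 < P.degree := by
          rw [Polynomial.degree_eq_natDegree hne]
          exact_mod_cast Nat.pos_of_ne_zero h0
        obtain ⟨z, hz⟩ := Complex.exists_root hdegpos
        obtain ⟨r, hfac⟩ := Polynomial.dvd_iff_isRoot.mpr hz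
        have hr0 : r ≠ 0 := by rintro rfl; rw [mul_zero] at hfac; exact hne hfac
        have hdr : r.natDegree ≤ n := by
          have hD := Polynomial.natDegree_mul (Polynomial.X_sub_C_ne_zero z) hr0
          rw [← hfac, Polynomial.natDegree_X_sub_C] at hD
          omega
        have hsplit : Polynomial.aeval (X i : R3) P
            = (X i - C z) * Polynomial.aeval (X i) r := by
          rw [hfac, map_mul, map_sub, Polynomial.aeval_X, Polynomial.aeval_C, algebraMap_eq]
        rw [hsplit] at hmem
        rcases hQ.mem_or_mem hmem with hm | hm
        · exact ⟨z, hz, hm⟩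
        · obtain ⟨γ, hγ, hγm⟩ := ihn r hdr hr0 hm
          exact ⟨γ, by rw [hfac, Polynomial.eval_mul, hγ, mul_zero], hγm⟩

theorem repr_axis0 (h : R3) (b c : ℕ) (hsupp : ∀ d ∈ h.support, d 1 = b ∧ d 2 = c) :
    ∃ P : Polynomial ℂ, (h ≠ 0 → P ≠ 0) ∧
      ((∃ d ∈ h.support, d 0 = 0) → P.coeff 0 ≠ 0) ∧
      h = X 1 ^ b * X 2 ^ c * Polynomial.aeval (X 0) P := by
  set mon : ℕ → (Fin 3 →₀ ℕ) := fun a =>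
    Finsupp.single 0 a + Finsupp.single 1 b + Finsupp.single 2 c with hmon
  have hmona : ∀ a, mon a 0 = a ∧ mon a 1 = b ∧ mon a 2 = c := by
    intro a
    refine ⟨?_, ?_, ?_⟩ <;> simp [hmon, Finsupp.single_apply]
  have hinj : Function.Injective mon := by
    intro x y hxy
    have : (mon x) 0 = (mon y) 0 := by rw [hxy]
    rwa [(hmona x).1, (hmona y).1] at this
  set D : ℕ := h.support.sup (fun d => d 0) with hD
  have hsupp' : ∀ d ∈ h.support, ∃ a, a ≤ D ∧ d = mon a := by
    intro d hd
    refine ⟨d 0, Finset.le_sup (f := fun d => d 0) hd, ?_⟩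
    ext j
    fin_cases j
    · show d 0 = mon (d 0) 0
      rw [(hmona (d 0)).1]
    · show d 1 = mon (d 0) 1
      rw [(hmona (d 0)).2.1, (hsupp d hd).1]
    · show d 2 = mon (d 0) 2
      rw [(hmona (d 0)).2.2, (hsupp d hd).2]
  have hsum := monosum h mon hinj D hsupp'
  set P : Polynomial ℂ := ∑ a ∈ Finset.range (D + 1),
    Polynomial.monomial a (coeff (mon a) h) with hPdef
  have hPcoeff : ∀ a, a ≤ D → P.coeff a = coeff (mon a) h := by
    intro a ha
    rw [hPdef, Polynomial.finset_sum_coeff]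
    simp only [Polynomial.coeff_monomial]
    rw [Finset.sum_ite_eq' (Finset.range (D + 1))]
    rw [if_pos (Finset.mem_range.mpr (by omega))]
  refine ⟨P, ?_, ?_, ?_⟩
  · intro hne h0
    obtain ⟨d, hd⟩ := MvPolynomial.support_nonempty.mpr hne
    obtain ⟨a, ha, rfl⟩ := hsupp' d hd
    have := MvPolynomial.mem_support_iff.mp hd
    rw [← hPcoeff a ha] at this
    rw [h0, Polynomial.coeff_zero] at this
    exact this rfl
  · rintro ⟨d, hd, hd0⟩
    obtain ⟨a, ha, rfl⟩ := hsupp' d hd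
    rw [(hmona a).1] at hd0
    subst hd0
    rw [hPcoeff 0 (by omega)]
    exact MvPolynomial.mem_support_iff.mp hd
  · rw [hsum, hPdef, map_sum, Finset.mul_sum]
    refine Finset.sum_congr rfl fun a _ => ?_
    rw [Polynomial.aeval_monomial, algebraMap_eq]
    rw [hmon]
    beta_reduce
    rw [← monoexpand a b c]
    ring

theorem repr_axis2 (h : R3) (a b : ℕ) (hsupp : ∀ d ∈ h.support, d 0 = a ∧ d 1 = b) :
    ∃ P : Polynomial ℂ, (h ≠ 0 → P ≠ 0) ∧
      ((∃ d ∈ h.support, d 2 = 0) → P.coeff 0 ≠ 0) ∧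
      h = X 0 ^ a * X 1 ^ b * Polynomial.aeval (X 2) P := by
  set mon : ℕ → (Fin 3 →₀ ℕ) := fun k =>
    Finsupp.single 0 a + Finsupp.single 1 b + Finsupp.single 2 k with hmon
  have hmona : ∀ k, mon k 0 = a ∧ mon k 1 = b ∧ mon k 2 = k := by
    intro k
    refine ⟨?_, ?_, ?_⟩ <;> simp [hmon, Finsupp.single_apply]
  have hinj : Function.Injective mon := by
    intro x y hxy
    have : (mon x) 2 = (mon y) 2 := by rw [hxy]
    rwa [(hmona x).2.2, (hmona y).2.2] at this
  set D : ℕ := h.support.sup (fun d => d 2) with hD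
  have hsupp' : ∀ d ∈ h.support, ∃ k, k ≤ D ∧ d = mon k := by
    intro d hd
    refine ⟨d 2, Finset.le_sup (f := fun d => d 2) hd, ?_⟩
    ext j
    fin_cases j
    · show d 0 = mon (d 2) 0
      rw [(hmona (d 2)).1, (hsupp d hd).1]
    · show d 1 = mon (d 2) 1
      rw [(hmona (d 2)).2.1, (hsupp d hd).2]
    · show d 2 = mon (d 2) 2
      rw [(hmona (d 2)).2.2]
  have hsum := monosum h mon hinj D hsupp'
  set P : Polynomial ℂ := ∑ k ∈ Finset.range (D + 1),
    Polynomial.monomial k (coeff (mon k) h) with hPdef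
  have hPcoeff : ∀ k, k ≤ D → P.coeff k = coeff (mon k) h := by
    intro k hk
    rw [hPdef, Polynomial.finset_sum_coeff]
    simp only [Polynomial.coeff_monomial]
    rw [Finset.sum_ite_eq' (Finset.range (D + 1))]
    rw [if_pos (Finset.mem_range.mpr (by omega))]
  refine ⟨P, ?_, ?_, ?_⟩
  · intro hne h0
    obtain ⟨d, hd⟩ := MvPolynomial.support_nonempty.mpr hne
    obtain ⟨k, hk, rfl⟩ := hsupp' d hd
    have := MvPolynomial.mem_support_iff.mp hd
    rw [← hPcoeff k hk] at this
    rw [h0, Polynomial.coeff_zero] at this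
    exact this rfl
  · rintro ⟨d, hd, hd0⟩
    obtain ⟨k, hk, rfl⟩ := hsupp' d hd
    rw [(hmona k).2.2] at hd0
    subst hd0
    rw [hPcoeff 0 (by omega)]
    exact MvPolynomial.mem_support_iff.mp hd
  · rw [hsum, hPdef, map_sum, Finset.mul_sum]
    refine Finset.sum_congr rfl fun k _ => ?_
    rw [Polynomial.aeval_monomial, algebraMap_eq]
    rw [hmon]
    beta_reduce
    rw [← monoexpand a b k]
    ring

theorem aeval_C_eval (v : Fin 3 → ℂ) (f : R3) :
    aeval (fun i => (C (v i) : R3)) f = C (eval v f) := by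
  induction f using MvPolynomial.induction_on with
  | C a => simp [algebraMap_eq]
  | add p q hp hq => rw [map_add, hp, hq, map_add, map_add]
  | mul_X p i hp => rw [map_mul, hp, aeval_X, map_mul, eval_X, map_mul]

theorem const_reduce {Q : Ideal R3} (hQ : Q.IsPrime) (a b c : ℂ)
    (h0 : X 0 - C a ∈ Q) (h1 : X 1 - C b ∈ Q) (h2 : X 2 - C c ∈ Q) :
    Q = Ideal.span {X 0 - C a, X 1 - C b, X 2 - C c} := by
  set S : Set R3 := {X 0 - C a, X 1 - C b, X 2 - C c} with hS
  have hsub : Ideal.span S ≤ Q := by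
    rw [Ideal.span_le]
    intro g hg
    simp only [hS, Set.mem_insert_iff, Set.mem_singleton_iff] at hg
    rcases hg with rfl | rfl | rfl
    · exact h0
    · exact h1
    · exact h2
  apply le_antisymm _ hsub
  intro f hf
  set v : Fin 3 → ℂ := ![a, b, c] with hv
  have hvmem : ∀ i, X i - (fun i => (C (v i) : R3)) i ∈ Ideal.span S := by
    intro i
    fin_cases i <;> exact Ideal.subset_span (by simp [hS, hv])
  have hdiff := subst_mem (Ideal.span S) _ hvmem f
  rw [aeval_C_eval v f] at hdiff
  have hCmem : C (eval v f) ∈ Q := by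
    have : f - C (eval v f) ∈ Q := hsub hdiff
    have := Q.sub_mem hf this
    simpa using this
  have hev : eval v f = 0 := by
    by_contra hne
    exact hQ.ne_top (Q.eq_top_of_isUnit_mem hCmem ((isUnit_iff_ne_zero.mpr hne).map (C : ℂ →+* R3)))
  rw [hev, map_zero, sub_zero] at hdiff
  exact hdiff

theorem univ_of_aeval (i : Fin 3) (vv : Fin 3 → Polynomial ℂ) (v : Fin 3 → R3)
    (hcomp : ∀ j, Polynomial.aeval (X i : R3) (vv j) = v j) (f : R3) :
    Polynomial.aeval (X i : R3) (MvPolynomial.aeval vv f) = MvPolynomial.aeval v f := by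
  have hh : (Polynomial.aeval (X i : R3)).comp (MvPolynomial.aeval vv)
      = MvPolynomial.aeval v := by
    apply MvPolynomial.algHom_ext
    intro j
    simp [hcomp j]
  exact DFunLike.congr_fun hh f

theorem pair01 {Q : Ideal R3} (hQ : Q.IsPrime) (m0 : X 0 ∈ Q) (m1 : X 1 ∈ Q) :
    Q = Ideal.span {X 0, X 1} ∨ ∃ γ : ℂ, Q = Ideal.span {X 0, X 1, X 2 - C γ} := by
  by_cases hQle : Q ≤ Ideal.span {X 0, X 1}
  · left
    refine le_antisymm hQle (Ideal.span_le.mpr ?_)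
    intro g hg
    simp only [Set.mem_insert_iff, Set.mem_singleton_iff] at hg
    rcases hg with rfl | rfl
    · exact m0
    · exact m1
  · right
    rw [SetLike.not_le_iff_exists] at hQle
    obtain ⟨f, hfQ, hfn⟩ := hQle
    have hvmem : ∀ i, X i - (![0, 0, X 2] : Fin 3 → R3) i ∈ Ideal.span {X 0, X 1} := by
      intro i
      fin_cases i
      · simpa using Ideal.subset_span (by simp : (X 0 : R3) ∈ ({X 0, X 1} : Set R3))
      · simpa using Ideal.subset_span (by simp : (X 1 : R3) ∈ ({X 0, X 1} : Set R3))
      · simp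
    have hdiff := subst_mem (Ideal.span {X 0, X 1}) ![0, 0, X 2] hvmem f
    have hspanQ : Ideal.span ({X 0, X 1} : Set R3) ≤ Q := by
      rw [Ideal.span_le]
      intro g hg
      simp only [Set.mem_insert_iff, Set.mem_singleton_iff] at hg
      rcases hg with rfl | rfl
      · exact m0
      · exact m1
    set g : R3 := aeval ![0, 0, X 2] f with hg
    have hgQ : g ∈ Q := by
      have h1 : f - g ∈ Q := hspanQ hdiff
      have := Q.sub_mem hfQ h1
      simpa using this
    have hgne : g ≠ 0 := by
      intro h00
      apply hfn
      rw [h00, sub_zero] at hdiff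
      exact hdiff
    set G : Polynomial ℂ := MvPolynomial.aeval ![0, 0, Polynomial.X] f with hG
    have hcomp : Polynomial.aeval (X 2 : R3) G = g := by
      rw [hG, hg]
      apply univ_of_aeval
      intro j
      fin_cases j <;> simp
    have hG0 : G ≠ 0 := fun h00 => hgne (by rw [← hcomp, h00, map_zero])
    obtain ⟨γ, _, hmem⟩ := uniroot hQ 2 G.natDegree G le_rfl hG0 (by rw [hcomp]; exact hgQ)
    refine ⟨γ, ?_⟩
    have := const_reduce hQ 0 0 γ (by simpa using m0) (by simpa using m1) hmem
    rw [this]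
    congr 1
    rw [show (X 0 - C 0 : R3) = X 0 by simp, show (X 1 - C 0 : R3) = X 1 by simp]

theorem pair02 {Q : Ideal R3} (hQ : Q.IsPrime) (m0 : X 0 ∈ Q) (m2 : X 2 ∈ Q) :
    Q = Ideal.span {X 0, X 2} ∨ ∃ β : ℂ, Q = Ideal.span {X 0, X 1 - C β, X 2} := by
  by_cases hQle : Q ≤ Ideal.span {X 0, X 2}
  · left
    refine le_antisymm hQle (Ideal.span_le.mpr ?_)
    intro g hg
    simp only [Set.mem_insert_iff, Set.mem_singleton_iff] at hg
    rcases hg with rfl | rfl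
    · exact m0
    · exact m2
  · right
    rw [SetLike.not_le_iff_exists] at hQle
    obtain ⟨f, hfQ, hfn⟩ := hQle
    have hvmem : ∀ i, X i - (![0, X 1, 0] : Fin 3 → R3) i ∈ Ideal.span {X 0, X 2} := by
      intro i
      fin_cases i
      · simpa using Ideal.subset_span (by simp : (X 0 : R3) ∈ ({X 0, X 2} : Set R3))
      · simp
      · simpa using Ideal.subset_span (by simp : (X 2 : R3) ∈ ({X 0, X 2} : Set R3))
    have hdiff := subst_mem (Ideal.span {X 0, X 2}) ![0, X 1, 0] hvmem f
    have hspanQ : Ideal.span ({X 0, X 2} : Set R3) ≤ Q := by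
      rw [Ideal.span_le]
      intro g hg
      simp only [Set.mem_insert_iff, Set.mem_singleton_iff] at hg
      rcases hg with rfl | rfl
      · exact m0
      · exact m2
    set g : R3 := aeval ![0, X 1, 0] f with hg
    have hgQ : g ∈ Q := by
      have h1 : f - g ∈ Q := hspanQ hdiff
      have := Q.sub_mem hfQ h1
      simpa using this
    have hgne : g ≠ 0 := by
      intro h00
      apply hfn
      rw [h00, sub_zero] at hdiff
      exact hdiff
    set G : Polynomial ℂ := MvPolynomial.aeval ![0, Polynomial.X, 0] f with hG
    have hcomp : Polynomial.aeval (X 1 : R3) G = g := by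
      rw [hG, hg]
      apply univ_of_aeval
      intro j
      fin_cases j <;> simp
    have hG0 : G ≠ 0 := fun h00 => hgne (by rw [← hcomp, h00, map_zero])
    obtain ⟨β, _, hmem⟩ := uniroot hQ 1 G.natDegree G le_rfl hG0 (by rw [hcomp]; exact hgQ)
    refine ⟨β, ?_⟩
    have := const_reduce hQ 0 β 0 (by simpa using m0) hmem (by simpa using m2)
    rw [this]
    congr 1
    rw [show (X 0 - C 0 : R3) = X 0 by simp, show (X 2 - C 0 : R3) = X 2 by simp]

theorem pair12 {Q : Ideal R3} (hQ : Q.IsPrime) (m1 : X 1 ∈ Q) (m2 : X 2 ∈ Q) :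
    Q = Ideal.span {X 1, X 2} ∨ ∃ α : ℂ, Q = Ideal.span {X 0 - C α, X 1, X 2} := by
  by_cases hQle : Q ≤ Ideal.span {X 1, X 2}
  · left
    refine le_antisymm hQle (Ideal.span_le.mpr ?_)
    intro g hg
    simp only [Set.mem_insert_iff, Set.mem_singleton_iff] at hg
    rcases hg with rfl | rfl
    · exact m1
    · exact m2
  · right
    rw [SetLike.not_le_iff_exists] at hQle
    obtain ⟨f, hfQ, hfn⟩ := hQle
    have hvmem : ∀ i, X i - (![X 0, 0, 0] : Fin 3 → R3) i ∈ Ideal.span {X 1, X 2} := by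
      intro i
      fin_cases i
      · simp
      · simpa using Ideal.subset_span (by simp : (X 1 : R3) ∈ ({X 1, X 2} : Set R3))
      · simpa using Ideal.subset_span (by simp : (X 2 : R3) ∈ ({X 1, X 2} : Set R3))
    have hdiff := subst_mem (Ideal.span {X 1, X 2}) ![X 0, 0, 0] hvmem f
    have hspanQ : Ideal.span ({X 1, X 2} : Set R3) ≤ Q := by
      rw [Ideal.span_le]
      intro g hg
      simp only [Set.mem_insert_iff, Set.mem_singleton_iff] at hg
      rcases hg with rfl | rfl
      · exact m1
      · exact m2
    set g : R3 := aeval ![X 0, 0, 0] f with hg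
    have hgQ : g ∈ Q := by
      have h1 : f - g ∈ Q := hspanQ hdiff
      have := Q.sub_mem hfQ h1
      simpa using this
    have hgne : g ≠ 0 := by
      intro h00
      apply hfn
      rw [h00, sub_zero] at hdiff
      exact hdiff
    set G : Polynomial ℂ := MvPolynomial.aeval ![Polynomial.X, 0, 0] f with hG
    have hcomp : Polynomial.aeval (X 0 : R3) G = g := by
      rw [hG, hg]
      apply univ_of_aeval
      intro j
      fin_cases j <;> simp
    have hG0 : G ≠ 0 := fun h00 => hgne (by rw [← hcomp, h00, map_zero])
    obtain ⟨α, _, hmem⟩ := uniroot hQ 0 G.natDegree G le_rfl hG0 (by rw [hcomp]; exact hgQ)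
    refine ⟨α, ?_⟩
    have := const_reduce hQ α 0 0 hmem (by simpa using m1) (by simpa using m2)
    rw [this]
    congr 1
    rw [show (X 1 - C 0 : R3) = X 1 by simp, show (X 2 - C 0 : R3) = X 2 by simp]

end Reduce
section Classify

theorem pow_mem_aux {Q : Ideal R3} (hQ : Q.IsPrime) {x : R3} {e : ℕ} (hx : x ^ e ∈ Q) :
    x ∈ Q ∧ 0 < e := by
  refine ⟨hQ.mem_of_pow_mem e hx, ?_⟩
  rcases Nat.eq_zero_or_pos e with rfl | hp
  · rw [pow_zero] at hx
    exact absurd (Q.eq_top_of_isUnit_mem hx isUnit_one) hQ.ne_top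
  · exact hp

theorem multiset_peel {Q : Ideal R3} (hQ : Q.IsPrime) (L : Multiset ℂ)
    (hm : (L.map (fun t => X 0 * X 2 - C t * X 1 ^ 2)).prod ∈ Q) :
    ∃ t ∈ L, (X 0 * X 2 - C t * X 1 ^ 2 : R3) ∈ Q := by
  induction L using Multiset.induction_on with
  | empty =>
      exfalso
      rw [Multiset.map_zero, Multiset.prod_zero] at hm
      exact absurd (Q.eq_top_of_isUnit_mem hm isUnit_one) hQ.ne_top
  | cons a s ih =>
      rw [Multiset.map_cons, Multiset.prod_cons] at hm
      rcases hQ.mem_or_mem hm with h | h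
      · exact ⟨a, Multiset.mem_cons_self a s, h⟩
      · obtain ⟨t, ht, htm⟩ := ih h
        exact ⟨t, Multiset.mem_cons_of_mem ht, htm⟩

theorem factor_mem {Q : Ideal R3} (hQ : Q.IsPrime) {h : R3} {i j k : ℕ} {c : ℂ}
    {L : Multiset ℂ} (hc : c ≠ 0)
    (hfac : h = C c * X 0 ^ i * X 1 ^ j * X 2 ^ k *
      (L.map (fun t => X 0 * X 2 - C t * X 1 ^ 2)).prod)
    (hh : h ∈ Q) :
    (X 0 ∈ Q ∧ 0 < i) ∨ (X 1 ∈ Q ∧ 0 < j) ∨ (X 2 ∈ Q ∧ 0 < k) ∨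
      ∃ t ∈ L, (X 0 * X 2 - C t * X 1 ^ 2 : R3) ∈ Q := by
  rw [hfac] at hh
  rcases hQ.mem_or_mem hh with h1 | h1
  · rcases hQ.mem_or_mem h1 with h2 | h2
    · rcases hQ.mem_or_mem h2 with h3 | h3
      · rcases hQ.mem_or_mem h3 with h4 | h4
        · exact absurd (Q.eq_top_of_isUnit_mem h4
            ((isUnit_iff_ne_zero.mpr hc).map (C : ℂ →+* R3))) hQ.ne_top
        · exact Or.inl (pow_mem_aux hQ h4)
      · exact Or.inr (Or.inl (pow_mem_aux hQ h3))
    · exact Or.inr (Or.inr (Or.inl (pow_mem_aux hQ h2)))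
  · exact Or.inr (Or.inr (Or.inr (multiset_peel hQ L h1)))

theorem double_comp_sum (wa wb : Fin 3 → ℕ) (f : R3) (I : Ideal R3)
    (hall : ∀ m m', weightedHomogeneousComponent wb m'
      (weightedHomogeneousComponent wa m f) ∈ I) : f ∈ I := by
  have h1 := sum_comp wa f (weightedTotalDegree wa f)
    (fun d hd => le_weightedTotalDegree wa hd)
  refine h1 ▸ Ideal.sum_mem I fun m _ => ?_
  have h2 := sum_comp wb (weightedHomogeneousComponent wa m f)
    (weightedTotalDegree wb _) (fun d hd => le_weightedTotalDegree wb hd)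
  exact h2 ▸ Ideal.sum_mem I fun m' _ => hall m m'

theorem EwL_eval (w : Fin 3 → ℕ) (f : R3) :
    EwL w f = (w 0 : ℂ) • (X 0 * pderiv 0 f) + (w 1 : ℂ) • (X 1 * pderiv 1 f)
      + (w 2 : ℂ) • (X 2 * pderiv 2 f) := by
  show (∑ i : Fin 3, (w i : ℂ) • (X i * pderiv i f)) = _
  rw [Fin.sum_univ_three]

theorem single0 {Q : Ideal R3} (hQ : Q.IsPrime)
    (hst1 : ∀ f ∈ Q, X 1 * pderiv 1 f ∈ Q) (hst2 : ∀ f ∈ Q, X 2 * pderiv 2 f ∈ Q)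
    (m0 : X 0 ∈ Q) (n1 : X 1 ∉ Q) (n2 : X 2 ∉ Q) :
    Q = Ideal.span {(X 0 : R3)} := by
  refine le_antisymm ?_ (Ideal.span_le.mpr (by simpa using m0))
  intro f hf
  have hwa : ∀ g ∈ Q, EwL ![0, 1, 0] g ∈ Q := by
    intro g hg
    have e : EwL ![0, 1, 0] g = X 1 * pderiv 1 g := by
      rw [EwL_eval]; norm_num [Matrix.cons_val_two]
    rw [e]; exact hst1 g hg
  have hwb : ∀ g ∈ Q, EwL ![0, 0, 1] g ∈ Q := by
    intro g hg
    have e : EwL ![0, 0, 1] g = X 2 * pderiv 2 g := by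
      rw [EwL_eval]; norm_num [Matrix.cons_val_two]
    rw [e]; exact hst2 g hg
  by_contra hfnot
  have hex : ∃ m m', weightedHomogeneousComponent ![0, 0, 1] m'
      (weightedHomogeneousComponent ![0, 1, 0] m f) ∉ Ideal.span {(X 0 : R3)} := by
    by_contra hall
    push_neg at hall
    exact hfnot (double_comp_sum _ _ f _ hall)
  obtain ⟨m, m', hh⟩ := hex
  set h := weightedHomogeneousComponent ![0, 0, 1] m'
    (weightedHomogeneousComponent ![0, 1, 0] m f) with hhdef
  have hhQ : h ∈ Q := comp_mem' hwb (comp_mem' hwa hf m) m'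
  have hhne : h ≠ 0 := fun h0 => hh (h0 ▸ Ideal.zero_mem _)
  have hsupp : ∀ d ∈ h.support, d 1 = m ∧ d 2 = m' := by
    intro d hd
    constructor
    · have := comp_support_weight (comp_support_subset hd)
      rw [weight_eval] at this
      simpa using this
    · have := comp_support_weight hd
      rw [weight_eval] at this
      simpa using this
  obtain ⟨P, hPne, hP0, hPrep⟩ := repr_axis0 h m m' hsupp
  have hd0 : ∃ d ∈ h.support, d 0 = 0 := by
    by_contra hnone
    push_neg at hnone
    exact hh (Ideal.mem_span_singleton.mpr (X_dvd_of_support 0 h hnone))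
  have hPc0 : P.coeff 0 ≠ 0 := hP0 hd0
  have hPn : P ≠ 0 := hPne hhne
  have hPQ : Polynomial.aeval (X 0 : R3) P ∈ Q := by
    rw [hPrep] at hhQ
    rw [show X 1 ^ m * X 2 ^ m' * Polynomial.aeval (X 0 : R3) P
      = (X 1 ^ m * X 2 ^ m') * Polynomial.aeval (X 0 : R3) P from by ring] at hhQ
    rcases hQ.mem_or_mem hhQ with h1 | h1
    · rcases hQ.mem_or_mem h1 with h2 | h2
      · exact absurd (pow_mem_aux hQ h2).1 n1
      · exact absurd (pow_mem_aux hQ h2).1 n2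
    · exact h1
  obtain ⟨γ, hev, hmem⟩ := uniroot hQ 0 P.natDegree P le_rfl hPn hPQ
  have hγ : γ ≠ 0 := by
    rintro rfl
    rw [← Polynomial.coeff_zero_eq_eval_zero] at hev
    exact hPc0 hev
  have hCγ : (C γ : R3) ∈ Q := by
    have := Q.sub_mem m0 hmem
    simpa using this
  exact absurd (Q.eq_top_of_isUnit_mem hCγ
    ((isUnit_iff_ne_zero.mpr hγ).map (C : ℂ →+* R3))) hQ.ne_top

theorem single2 {Q : Ideal R3} (hQ : Q.IsPrime)
    (hst0 : ∀ f ∈ Q, X 0 * pderiv 0 f ∈ Q) (hst1 : ∀ f ∈ Q, X 1 * pderiv 1 f ∈ Q)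
    (m2 : X 2 ∈ Q) (n0 : X 0 ∉ Q) (n1 : X 1 ∉ Q) :
    Q = Ideal.span {(X 2 : R3)} := by
  refine le_antisymm ?_ (Ideal.span_le.mpr (by simpa using m2))
  intro f hf
  have hwa : ∀ g ∈ Q, EwL ![1, 0, 0] g ∈ Q := by
    intro g hg
    have e : EwL ![1, 0, 0] g = X 0 * pderiv 0 g := by
      rw [EwL_eval]; norm_num [Matrix.cons_val_two]
    rw [e]; exact hst0 g hg
  have hwb : ∀ g ∈ Q, EwL ![0, 1, 0] g ∈ Q := by
    intro g hg
    have e : EwL ![0, 1, 0] g = X 1 * pderiv 1 g := by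
      rw [EwL_eval]; norm_num [Matrix.cons_val_two]
    rw [e]; exact hst1 g hg
  by_contra hfnot
  have hex : ∃ m m', weightedHomogeneousComponent ![0, 1, 0] m'
      (weightedHomogeneousComponent ![1, 0, 0] m f) ∉ Ideal.span {(X 2 : R3)} := by
    by_contra hall
    push_neg at hall
    exact hfnot (double_comp_sum _ _ f _ hall)
  obtain ⟨m, m', hh⟩ := hex
  set h := weightedHomogeneousComponent ![0, 1, 0] m'
    (weightedHomogeneousComponent ![1, 0, 0] m f) with hhdef
  have hhQ : h ∈ Q := comp_mem' hwb (comp_mem' hwa hf m) m'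
  have hhne : h ≠ 0 := fun h0 => hh (h0 ▸ Ideal.zero_mem _)
  have hsupp : ∀ d ∈ h.support, d 0 = m ∧ d 1 = m' := by
    intro d hd
    constructor
    · have := comp_support_weight (comp_support_subset hd)
      rw [weight_eval] at this
      simpa using this
    · have := comp_support_weight hd
      rw [weight_eval] at this
      simpa using this
  obtain ⟨P, hPne, hP0, hPrep⟩ := repr_axis2 h m m' hsupp
  have hd0 : ∃ d ∈ h.support, d 2 = 0 := by
    by_contra hnone
    push_neg at hnone
    exact hh (Ideal.mem_span_singleton.mpr (X_dvd_of_support 2 h hnone))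
  have hPc0 : P.coeff 0 ≠ 0 := hP0 hd0
  have hPn : P ≠ 0 := hPne hhne
  have hPQ : Polynomial.aeval (X 2 : R3) P ∈ Q := by
    rw [hPrep] at hhQ
    rw [show X 0 ^ m * X 1 ^ m' * Polynomial.aeval (X 2 : R3) P
      = (X 0 ^ m * X 1 ^ m') * Polynomial.aeval (X 2 : R3) P from by ring] at hhQ
    rcases hQ.mem_or_mem hhQ with h1 | h1
    · rcases hQ.mem_or_mem h1 with h2 | h2
      · exact absurd (pow_mem_aux hQ h2).1 n0
      · exact absurd (pow_mem_aux hQ h2).1 n1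
    · exact h1
  obtain ⟨γ, hev, hmem⟩ := uniroot hQ 2 P.natDegree P le_rfl hPn hPQ
  have hγ : γ ≠ 0 := by
    rintro rfl
    rw [← Polynomial.coeff_zero_eq_eval_zero] at hev
    exact hPc0 hev
  have hCγ : (C γ : R3) ∈ Q := by
    have := Q.sub_mem m2 hmem
    simpa using this
  exact absurd (Q.eq_top_of_isUnit_mem hCγ
    ((isUnit_iff_ne_zero.mpr hγ).map (C : ℂ →+* R3))) hQ.ne_top

theorem single1 {Q : Ideal R3} (hQ : Q.IsPrime)
    (hsa : ∀ f ∈ Q, EwL w1 f ∈ Q) (hsb : ∀ f ∈ Q, EwL w2 f ∈ Q)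
    (m1 : X 1 ∈ Q) (n0 : X 0 ∉ Q) (n2 : X 2 ∉ Q) :
    Q = Ideal.span {(X 1 : R3)} := by
  refine le_antisymm ?_ (Ideal.span_le.mpr (by simpa using m1))
  intro f hf
  apply double_comp_sum w1 w2 f
  intro m m'
  set h := weightedHomogeneousComponent w2 m' (weightedHomogeneousComponent w1 m f) with hhdef
  by_cases hhne : h = 0
  · rw [hhne]; exact Ideal.zero_mem _
  have hhQ : h ∈ Q := comp_mem' hsb (comp_mem' hsa hf m) m'
  have hsupp : ∀ d ∈ h.support, Finsupp.weight w1 d = m ∧ Finsupp.weight w2 d = m' :=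
    fun d hd => ⟨comp_support_weight (comp_support_subset hd), comp_support_weight hd⟩
  obtain ⟨i, j, k, c, L, hc, hL, hfac⟩ := fact_decomp (m + m') h hhne m m' le_rfl hsupp
  rcases factor_mem hQ hc hfac hhQ with ⟨hx, _⟩ | ⟨hx, hj⟩ | ⟨hx, _⟩ | ⟨t, ht, htm⟩
  · exact absurd hx n0
  · apply Ideal.mem_span_singleton.mpr
    obtain ⟨j', rfl⟩ : ∃ j', j = j' + 1 := ⟨j - 1, by omega⟩
    exact ⟨C c * X 0 ^ i * X 1 ^ j' * X 2 ^ k *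
      (L.map (fun t => X 0 * X 2 - C t * X 1 ^ 2)).prod, by rw [hfac]; ring⟩
  · exact absurd hx n2
  · exfalso
    have hCt : (C t * X 1 ^ 2 : R3) ∈ Q := by
      rw [show (C t * X 1 ^ 2 : R3) = (C t * X 1) * X 1 from by ring]
      exact Q.mul_mem_left _ m1
    have hX02 : (X 0 * X 2 : R3) ∈ Q := by
      have := Q.add_mem htm hCt
      simpa using this
    rcases hQ.mem_or_mem hX02 with h' | h'
    · exact n0 h'
    · exact n2 h'

theorem conic {Q : Ideal R3} (hQ : Q.IsPrime)
    (hsa : ∀ f ∈ Q, EwL w1 f ∈ Q) (hsb : ∀ f ∈ Q, EwL w2 f ∈ Q)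
    (n0 : X 0 ∉ Q) (n1 : X 1 ∉ Q) (n2 : X 2 ∉ Q) (hbot : Q ≠ ⊥) :
    ∃ l : ℂ, l ≠ 0 ∧ Q = Ideal.span {(X 0 * X 2 - C l * X 1 ^ 2 : R3)} := by
  obtain ⟨f0, hf0Q, hf0ne⟩ := Submodule.ne_bot_iff Q |>.mp hbot
  obtain ⟨m0, m0', hne⟩ : ∃ m m', weightedHomogeneousComponent w2 m'
      (weightedHomogeneousComponent w1 m f0) ≠ 0 := by
    by_contra hall
    push_neg at hall
    apply hf0ne
    have : f0 ∈ (⊥ : Ideal R3) :=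
      double_comp_sum w1 w2 f0 ⊥ (fun m m' => by rw [hall m m']; exact Ideal.zero_mem _)
    simpa using this
  set h0 := weightedHomogeneousComponent w2 m0' (weightedHomogeneousComponent w1 m0 f0)
    with hh0def
  have hh0Q : h0 ∈ Q := comp_mem' hsb (comp_mem' hsa hf0Q m0) m0'
  have hsupp0 : ∀ d ∈ h0.support, Finsupp.weight w1 d = m0 ∧ Finsupp.weight w2 d = m0' :=
    fun d hd => ⟨comp_support_weight (comp_support_subset hd), comp_support_weight hd⟩
  obtain ⟨i, j, k, c, L, hc, hL, hfac⟩ := fact_decomp (m0 + m0') h0 hne m0 m0' le_rfl hsupp0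
  rcases factor_mem hQ hc hfac hh0Q with ⟨hx, _⟩ | ⟨hx, _⟩ | ⟨hx, _⟩ | ⟨t, ht, htm⟩
  · exact absurd hx n0
  · exact absurd hx n1
  · exact absurd hx n2
  refine ⟨t, hL t ht, ?_⟩
  refine le_antisymm ?_ (Ideal.span_le.mpr (by simpa using htm))
  intro f hf
  apply double_comp_sum w1 w2 f
  intro m m'
  set h := weightedHomogeneousComponent w2 m' (weightedHomogeneousComponent w1 m f) with hhdef
  by_cases hhne : h = 0
  · rw [hhne]; exact Ideal.zero_mem _
  have hhQ : h ∈ Q := comp_mem' hsb (comp_mem' hsa hf m) m'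
  have hsupp : ∀ d ∈ h.support, Finsupp.weight w1 d = m ∧ Finsupp.weight w2 d = m' :=
    fun d hd => ⟨comp_support_weight (comp_support_subset hd), comp_support_weight hd⟩
  obtain ⟨i', j', k', c', L', hc', hL', hfac'⟩ :=
    fact_decomp (m + m') h hhne m m' le_rfl hsupp
  rcases factor_mem hQ hc' hfac' hhQ with ⟨hx, _⟩ | ⟨hx, _⟩ | ⟨hx, _⟩ | ⟨t', ht', htm'⟩
  · exact absurd hx n0
  · exact absurd hx n1
  · exact absurd hx n2
  have htt : t' = t := by
    by_contra hne'
    have hdiffmem : (C (t' - t) * X 1 ^ 2 : R3) ∈ Q := by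
      have hsub := Q.sub_mem htm htm'
      have : (X 0 * X 2 - C t * X 1 ^ 2 : R3) - (X 0 * X 2 - C t' * X 1 ^ 2)
          = C (t' - t) * X 1 ^ 2 := by
        rw [map_sub]; ring
      rwa [this] at hsub
    rcases hQ.mem_or_mem hdiffmem with h' | h'
    · exact absurd (Q.eq_top_of_isUnit_mem h'
        ((isUnit_iff_ne_zero.mpr (sub_ne_zero.mpr hne')).map (C : ℂ →+* R3))) hQ.ne_top
    · exact n1 (pow_mem_aux hQ h').1
  subst htt
  apply Ideal.mem_span_singleton.mpr
  have hdvd : (X 0 * X 2 - C t' * X 1 ^ 2 : R3) ∣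
      (L'.map (fun t => X 0 * X 2 - C t * X 1 ^ 2)).prod := by
    apply Multiset.dvd_prod
    exact Multiset.mem_map_of_mem _ ht'
  obtain ⟨w, hw⟩ := hdvd
  exact ⟨C c' * X 0 ^ i' * X 1 ^ j' * X 2 ^ k' * w, by rw [hfac', hw]; ring⟩

end Classify

open MvPolynomial in
/-- the classification of prime Poisson ideals of `ℂ[x₁,x₂,x₃]` with
`{x₁,x₂} = -x₁x₂`, `{x₁,x₃} = -2x₁x₃`, `{x₂,x₃} = -x₂x₃` (Vancliff's example). -/
theorem poisson_primes_of_vancliff_example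
    (B : PoissonBracket ℂ (MvPolynomial (Fin 3) ℂ))
    (h12 : B.bracket (X 0) (X 1) = -(X 0 * X 1))
    (h13 : B.bracket (X 0) (X 2) = -(2 * (X 0 * X 2)))
    (h23 : B.bracket (X 1) (X 2) = -(X 1 * X 2))
    (Q : Ideal (MvPolynomial (Fin 3) ℂ)) :
    (Q.IsPrime ∧ IsPoissonIdeal B Q) ↔
      ((∃ α : ℂ, Q = Ideal.span {X 0 - C α, X 1, X 2}) ∨
       (∃ β : ℂ, Q = Ideal.span {X 0, X 1 - C β, X 2}) ∨
       (∃ γ : ℂ, Q = Ideal.span {X 0, X 1, X 2 - C γ}) ∨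
       Q = Ideal.span {X 0, X 1} ∨
       Q = Ideal.span {X 0, X 2} ∨
       Q = Ideal.span {X 1, X 2} ∨
       Q = Ideal.span {(X 0 : MvPolynomial (Fin 3) ℂ)} ∨
       Q = Ideal.span {(X 1 : MvPolynomial (Fin 3) ℂ)} ∨
       Q = Ideal.span {(X 2 : MvPolynomial (Fin 3) ℂ)} ∨
       (∃ l : ℂ, l ≠ 0 ∧ Q = Ideal.span {X 0 * X 2 - C l * (X 1) ^ 2}) ∨
       Q = ⊥) := by
  constructor
  · rintro ⟨hQ, hPo⟩
    have ew1 : ∀ f : R3, EwL w1 f = X 1 * pderiv 1 f + 2 * (X 2 * pderiv 2 f) := by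
      intro f
      rw [EwL_eval]
      norm_num [w1, Matrix.cons_val_two]
      rw [two_smul]
      ring
    have ew2 : ∀ f : R3, EwL w2 f = 2 * (X 0 * pderiv 0 f) + X 1 * pderiv 1 f := by
      intro f
      rw [EwL_eval]
      norm_num [w2, Matrix.cons_val_two]
      rw [two_smul]
      ring
    by_cases q0 : X 0 ∈ Q
    · by_cases q1 : X 1 ∈ Q
      · rcases pair01 hQ q0 q1 with h | ⟨γ, h⟩
        · exact Or.inr (Or.inr (Or.inr (Or.inl h)))
        · exact Or.inr (Or.inr (Or.inl ⟨γ, h⟩))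
      · by_cases q2 : X 2 ∈ Q
        · rcases pair02 hQ q0 q2 with h | ⟨β, h⟩
          · exact Or.inr (Or.inr (Or.inr (Or.inr (Or.inl h))))
          · exact Or.inr (Or.inl ⟨β, h⟩)
        · -- X0 ∈ Q, X1 ∉ Q, X2 ∉ Q : Q = span {X 0}
          have hX0d : ∀ f : R3, X 0 * pderiv 0 f ∈ Q := fun f =>
            Ideal.mul_mem_right _ _ q0
          have hst1 : ∀ f ∈ Q, X 1 * pderiv 1 f ∈ Q := by
            intro f hf
            have hE2 := stabE2 h13 h23 hQ hPo q2 hf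
            have h2m : (2 : R3) * (X 0 * pderiv 0 f) ∈ Q := Ideal.mul_mem_left _ _ (hX0d f)
            have heq : X 1 * pderiv 1 f
                = (2 * (X 0 * pderiv 0 f) + X 1 * pderiv 1 f) - 2 * (X 0 * pderiv 0 f) := by
              ring
            rw [heq]
            exact Q.sub_mem hE2 h2m
          have hst2 : ∀ f ∈ Q, X 2 * pderiv 2 f ∈ Q := by
            intro f hf
            have hW := stabW h12 h23 hQ hPo q1 hf
            have heq : X 2 * pderiv 2 f
                = X 0 * pderiv 0 f - (X 0 * pderiv 0 f - X 2 * pderiv 2 f) := by ring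
            rw [heq]
            exact Q.sub_mem (hX0d f) hW
          exact Or.inr (Or.inr (Or.inr (Or.inr (Or.inr (Or.inr (Or.inl
            (single0 hQ hst1 hst2 q0 q1 q2)))))))
    · by_cases q1 : X 1 ∈ Q
      · by_cases q2 : X 2 ∈ Q
        · rcases pair12 hQ q1 q2 with h | ⟨α, h⟩
          · exact Or.inr (Or.inr (Or.inr (Or.inr (Or.inr (Or.inl h)))))
          · exact Or.inl ⟨α, h⟩
        · -- X1 ∈ Q, X0 ∉ Q, X2 ∉ Q : Q = span {X 1}
          have hsa : ∀ f ∈ Q, EwL w1 f ∈ Q := fun f hf => by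
            rw [ew1 f]; exact stabE1 h12 h13 hQ hPo q0 hf
          have hsb : ∀ f ∈ Q, EwL w2 f ∈ Q := fun f hf => by
            rw [ew2 f]; exact stabE2 h13 h23 hQ hPo q2 hf
          exact Or.inr (Or.inr (Or.inr (Or.inr (Or.inr (Or.inr (Or.inr (Or.inl
            (single1 hQ hsa hsb q1 q0 q2))))))))
      · by_cases q2 : X 2 ∈ Q
        · -- X2 ∈ Q, X0 ∉ Q, X1 ∉ Q : Q = span {X 2}
          have hX2d : ∀ f : R3, X 2 * pderiv 2 f ∈ Q := fun f =>
            Ideal.mul_mem_right _ _ q2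
          have hst0 : ∀ f ∈ Q, X 0 * pderiv 0 f ∈ Q := by
            intro f hf
            have hW := stabW h12 h23 hQ hPo q1 hf
            have heq : X 0 * pderiv 0 f
                = (X 0 * pderiv 0 f - X 2 * pderiv 2 f) + X 2 * pderiv 2 f := by ring
            rw [heq]
            exact Q.add_mem hW (hX2d f)
          have hst1 : ∀ f ∈ Q, X 1 * pderiv 1 f ∈ Q := by
            intro f hf
            have hE1 := stabE1 h12 h13 hQ hPo q0 hf
            have h2m : (2 : R3) * (X 2 * pderiv 2 f) ∈ Q := Ideal.mul_mem_left _ _ (hX2d f)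
            have heq : X 1 * pderiv 1 f
                = (X 1 * pderiv 1 f + 2 * (X 2 * pderiv 2 f)) - 2 * (X 2 * pderiv 2 f) := by
              ring
            rw [heq]
            exact Q.sub_mem hE1 h2m
          exact Or.inr (Or.inr (Or.inr (Or.inr (Or.inr (Or.inr (Or.inr (Or.inr (Or.inl
            (single2 hQ hst0 hst1 q2 q0 q1)))))))))
        · -- none of the variables in Q
          by_cases qbot : Q = ⊥
          · exact Or.inr (Or.inr (Or.inr (Or.inr (Or.inr (Or.inr (Or.inr (Or.inr (Or.inr
              (Or.inr qbot)))))))))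
          · have hsa : ∀ f ∈ Q, EwL w1 f ∈ Q := fun f hf => by
              rw [ew1 f]; exact stabE1 h12 h13 hQ hPo q0 hf
            have hsb : ∀ f ∈ Q, EwL w2 f ∈ Q := fun f hf => by
              rw [ew2 f]; exact stabE2 h13 h23 hQ hPo q2 hf
            exact Or.inr (Or.inr (Or.inr (Or.inr (Or.inr (Or.inr (Or.inr (Or.inr (Or.inr
              (Or.inl (conic hQ hsa hsb q0 q1 q2 qbot))))))))))
  · rintro (⟨α, rfl⟩ | ⟨β, rfl⟩ | ⟨γ, rfl⟩ | rfl | rfl | rfl | rfl | rfl | rfl |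
      ⟨l, hl, rfl⟩ | rfl)
    · exact ⟨prime_span_a α, po_a h12 h13 h23 α⟩
    · exact ⟨prime_span_b β, po_b h12 h13 h23 β⟩
    · exact ⟨prime_span_c γ, po_c h12 h13 h23 γ⟩
    · exact ⟨prime_span_01, po_01 h12 h13 h23⟩
    · exact ⟨prime_span_02, po_02 h12 h13 h23⟩
    · exact ⟨prime_span_12, po_12 h12 h13 h23⟩
    · exact ⟨prime_span_0, po_0 h12 h13 h23⟩
    · exact ⟨prime_span_1, po_1 h12 h13 h23⟩
    · exact ⟨prime_span_2, po_2 h12 h13 h23⟩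
    · exact ⟨(Ideal.span_singleton_prime (fquad_ne_zero l)).mpr (prime_fquad l hl),
        po_f h12 h13 h23 l⟩
    · refine ⟨Ideal.bot_prime, ?_⟩
      intro a x hx
      rw [Ideal.mem_bot] at hx
      subst hx
      rw [br_zero_right]
      exact Ideal.zero_mem _
end

section
/- Let α be an irrational real number, and let R = ℂ[x1, x2, x3] be the polynomial ring in three variables over ℂ, equipped with a Poisson bracket satisfying {x1,x2} = x2, {x1,x3} = α·x3, and {x2,x3} = 0. Then the Poisson cores of the maximal ideals of R are as follows: P(⟨x1 − a, x2, x3⟩) = ⟨x1 − a, x2, x3⟩ for all a ∈ ℂ; P(⟨x1 − a, x2 − b, x3⟩) = ⟨x3⟩ for all a ∈ ℂ and b ∈ ℂ \ {0}; P(⟨x1 − a, x2, x3 − c⟩) = ⟨x2⟩ for all a ∈ ℂ and c ∈ ℂ \ {0}; and P(⟨x1 − a, x2 − b, x3 − c⟩) = ⟨0⟩ for all a ∈ ℂ and b, c ∈ ℂ \ {0}. -/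
namespace PoissonAux

open MvPolynomial

abbrev R3 : Type := MvPolynomial (Fin 3) ℂ

variable {B : PoissonBracket ℂ R3}

lemma br_zero_right (a : R3) : B.bracket a 0 = 0 := by
  have h := B.smul_right 0 a 0
  simpa using h

lemma br_one_right (a : R3) : B.bracket a 1 = 0 := by
  have h := B.leibniz a 1 1
  rw [mul_one] at h
  linear_combination -h

lemma br_C_right (a : R3) (c : ℂ) : B.bracket a (C c) = 0 := by
  have hc : (C c : R3) = c • 1 := by 
    rw [smul_eq_C_mul, mul_one]
  rw [hc, B.smul_right, br_one_right, smul_zero]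

lemma br_C_left (a : R3) (c : ℂ) : B.bracket (C c) a = 0 := by
  rw [B.antisymm, br_C_right, neg_zero]

lemma br_neg_right (a b : R3) : B.bracket a (-b) = - B.bracket a b := by
  have h : (-b : R3) = (-1 : ℂ) • b := by simp
  rw [h, B.smul_right]; simp

lemma br_sub_right (a b c : R3) : B.bracket a (b - c) = B.bracket a b - B.bracket a c := by
  rw [sub_eq_add_neg, B.add_right, br_neg_right, sub_eq_add_neg]

lemma br_self (a : R3) : B.bracket a a = 0 := by
  have h := B.antisymm a a
  have h2 : (2:ℂ) • B.bracket a a = 0 := by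
    rw [two_smul]; nth_rewrite 2 [h]; rw [add_neg_cancel]
  have := congrArg (fun x => ((2:ℂ)⁻¹) • x) h2
  simpa [smul_smul] using this

lemma leibniz_left (a b c : R3) :
    B.bracket (b * c) a = B.bracket b a * c + b * B.bracket c a := by
  rw [B.antisymm (b*c) a, B.leibniz a b c, B.antisymm b a, B.antisymm c a]
  ring

lemma bracket_sum {X : Type*} (a : R3) (s : Finset X) (f : X → R3) :
    B.bracket a (∑ x ∈ s, f x) = ∑ x ∈ s, B.bracket a (f x) := by
  classical
  induction s using Finset.induction_on with
  | empty => simpa using br_zero_right a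
  | insert _ _ h ih => rw [Finset.sum_insert h, Finset.sum_insert h, B.add_right, ih]

lemma deriv_mem {D : R3 → R3} (hadd : ∀ p q, D (p + q) = D p + D q)
    (hmul : ∀ p q, D (p * q) = D p * q + p * D q)
    (hC : ∀ c, D (C c) = 0) {I : Ideal R3} (hX : ∀ i, D (X i) ∈ I) :
    ∀ f, D f ∈ I := by
  intro f
  induction f using MvPolynomial.induction_on with
  | C c => rw [hC]; exact zero_mem I
  | add p q hp hq => rw [hadd]; exact add_mem hp hq
  | mul_X p i hp =>
      rw [hmul]
      exact add_mem (Ideal.mul_mem_right _ _ hp) (Ideal.mul_mem_left _ _ (hX i))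

lemma deriv_ext {D D' : R3 → R3} (hadd : ∀ p q, D (p + q) = D p + D q)
    (hadd' : ∀ p q, D' (p + q) = D' p + D' q)
    (hmul : ∀ p q, D (p * q) = D p * q + p * D q)
    (hmul' : ∀ p q, D' (p * q) = D' p * q + p * D' q)
    (hC : ∀ c, D (C c) = D' (C c)) (hXe : ∀ i, D (X i) = D' (X i)) :
    ∀ f, D f = D' f := by
  intro f
  induction f using MvPolynomial.induction_on with
  | C c => exact hC c
  | add p q hp hq => rw [hadd, hadd', hp, hq]
  | mul_X p i hp => rw [hmul, hmul', hp, hXe i]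

end PoissonAux
namespace PoissonAux
open MvPolynomial
abbrev R3' : Type := MvPolynomial (Fin 3) ℂ
section Test
variable {B : PoissonBracket ℂ R3} {α : ℝ}

lemma D1_eq (h12 : B.bracket (X 0) (X 1) = X 1)
    (h13 : B.bracket (X 0) (X 2) = C (α : ℂ) * X 2) (f : R3) :
    B.bracket (X 0) f = X 1 * pderiv 1 f + C (α:ℂ) * (X 2 * pderiv 2 f) := by
  refine deriv_ext (D' := fun p => X 1 * pderiv 1 p + C (α:ℂ) * (X 2 * pderiv 2 p)) (B.add_right (X 0)) ?_ (B.leibniz (X 0)) ?_ ?_ ?_ f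
  · intro p q; simp only [map_add]; ring
  · intro p q; simp only [pderiv_mul]; ring
  · intro c; simp [br_C_right]
  · intro i
    fin_cases i
    · simp [br_self, pderiv_X_of_ne]
    · simp [h12, pderiv_X_self, pderiv_X_of_ne]
    · simp [h13, pderiv_X_self, pderiv_X_of_ne]

lemma D2_eq (h12 : B.bracket (X 0) (X 1) = X 1)
    (h23 : B.bracket (X 1) (X 2) = 0) (f : R3) :
    B.bracket (X 1) f = C (-1 : ℂ) * (X 1 * pderiv 0 f) := by
  refine deriv_ext (D' := fun p => C (-1 : ℂ) * (X 1 * pderiv 0 p)) (B.add_right (X 1)) ?_ (B.leibniz (X 1)) ?_ ?_ ?_ f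
  · intro p q; simp only [map_add]; ring
  · intro p q; simp only [pderiv_mul]; ring
  · intro c; simp [br_C_right]
  · intro i
    fin_cases i
    · show B.bracket (X 1) (X 0) = C (-1 : ℂ) * (X 1 * pderiv 0 (X 0))
      rw [B.antisymm (X 1) (X 0), h12]
      simp [pderiv_X_self, pderiv_X_of_ne]
    · simp [br_self, pderiv_X_of_ne]
    · simp [h23, pderiv_X_of_ne]

lemma D3_eq (h13 : B.bracket (X 0) (X 2) = C (α : ℂ) * X 2)
    (h23 : B.bracket (X 1) (X 2) = 0) (f : R3) :
    B.bracket (X 2) f = C (-(α:ℂ)) * (X 2 * pderiv 0 f) := by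
  refine deriv_ext (D' := fun p => C (-(α:ℂ)) * (X 2 * pderiv 0 p)) (B.add_right (X 2)) ?_ (B.leibniz (X 2)) ?_ ?_ ?_ f
  · intro p q; simp only [map_add]; ring
  · intro p q; simp only [pderiv_mul]; ring
  · intro c; simp [br_C_right]
  · intro i
    fin_cases i
    · show B.bracket (X 2) (X 0) = C (-(α:ℂ)) * (X 2 * pderiv 0 (X 0))
      rw [B.antisymm (X 2) (X 0), h13]
      simp [pderiv_X_self, pderiv_X_of_ne]
    · show B.bracket (X 2) (X 1) = C (-(α:ℂ)) * (X 2 * pderiv 0 (X 1))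
      rw [B.antisymm (X 2) (X 1), h23]
      simp [pderiv_X_of_ne]
    · simp [br_self, pderiv_X_of_ne]

end Test
end PoissonAux
namespace PoissonAux
open MvPolynomial
section Test3
variable {B : PoissonBracket ℂ R3} {α : ℝ}

noncomputable def wt (α : ℝ) (m : Fin 3 →₀ ℕ) : ℂ := (m 1 : ℂ) + (α : ℂ) * (m 2 : ℕ)

lemma single_add_sub (i : Fin 3) (m : Fin 3 →₀ ℕ) (h : m i ≠ 0) :
    Finsupp.single i 1 + (m - Finsupp.single i 1) = m := by
  ext s
  simp only [Finsupp.add_apply, Finsupp.tsub_apply, Finsupp.single_apply]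
  split_ifs with hi
  · subst hi; omega
  · omega

lemma sub_single_add (i : Fin 3) (n : Fin 3 →₀ ℕ) :
    (n + Finsupp.single i 1) - Finsupp.single i 1 = n := by
  ext s
  simp only [Finsupp.add_apply, Finsupp.tsub_apply, Finsupp.single_apply]
  split_ifs with hi
  · subst hi; omega
  · omega

lemma add_single_apply_self (i : Fin 3) (n : Fin 3 →₀ ℕ) :
    ((n + Finsupp.single i 1 : Fin 3 →₀ ℕ)) i = n i + 1 := by
  simp [Finsupp.add_apply, Finsupp.single_apply]

lemma X_eq_monomial (i : Fin 3) : (X i : R3) = monomial (Finsupp.single i 1) 1 := by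
  rw [← pow_one (X i : R3), X_pow_eq_monomial]

lemma coeff_pderiv (i : Fin 3) (p : R3) (n : Fin 3 →₀ ℕ) :
    coeff n (pderiv i p) = coeff (n + Finsupp.single i 1) p * ((n i : ℂ) + 1) := by
  induction p using MvPolynomial.induction_on' with
  | monomial m c =>
      rw [pderiv_monomial, coeff_monomial, coeff_monomial]
      by_cases h : m = n + Finsupp.single i 1
      · subst h
        rw [if_pos (sub_single_add i n), if_pos rfl]
        rw [add_single_apply_self]
        push_cast
        ring
      · rw [if_neg h]
        by_cases h' : m - Finsupp.single i 1 = n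
        · rw [if_pos h']
          have hmi : m i = 0 := by
            by_contra hmi
            apply h
            rw [← h', add_comm (m - Finsupp.single i 1) (Finsupp.single i 1),
              single_add_sub i m hmi]
          rw [hmi]
          simp
        · rw [if_neg h', zero_mul]
  | add p q hp hq => simp [map_add, coeff_add, hp, hq, add_mul]

lemma X_mul_pd_monomial (i : Fin 3) (m : Fin 3 →₀ ℕ) (c : ℂ) :
    (X i : R3) * monomial (m - Finsupp.single i 1) (c * (m i : ℕ)) =
      ((m i : ℕ) : ℂ) • monomial m c := by
  rcases Nat.eq_zero_or_pos (m i) with h | h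
  · simp [h]
  · rw [smul_eq_C_mul, C_mul_monomial, X_eq_monomial, monomial_mul, one_mul,
      single_add_sub i m (by omega), mul_comm c (((m i : ℕ)) : ℂ)]

lemma D1_monomial (h12 : B.bracket (X 0) (X 1) = X 1)
    (h13 : B.bracket (X 0) (X 2) = C (α : ℂ) * X 2) (m : Fin 3 →₀ ℕ) (c : ℂ) :
    B.bracket (X 0) (monomial m c) = C (wt α m) * monomial m c := by
  rw [D1_eq h12 h13, pderiv_monomial, pderiv_monomial, X_mul_pd_monomial, X_mul_pd_monomial]
  rw [wt]
  simp only [smul_eq_C_mul, map_add, map_mul, map_natCast]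
  ring

lemma coeff_D1 (h12 : B.bracket (X 0) (X 1) = X 1)
    (h13 : B.bracket (X 0) (X 2) = C (α : ℂ) * X 2) (f : R3) (n : Fin 3 →₀ ℕ) :
    coeff n (B.bracket (X 0) f) = wt α n * coeff n f := by
  classical
  conv_lhs => rw [f.as_sum, bracket_sum]
  rw [coeff_sum]
  have h1 : ∀ m ∈ f.support, coeff n (B.bracket (X 0) (monomial m (coeff m f)))
      = if m = n then wt α m * coeff m f else 0 := by
    intro m _
    rw [D1_monomial h12 h13, coeff_C_mul, coeff_monomial]
    split_ifs <;> simp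
  rw [Finset.sum_congr rfl h1, Finset.sum_ite_eq' f.support n (fun m => wt α m * coeff m f)]
  split_ifs with h
  · rfl
  · rw [MvPolynomial.notMem_support_iff.mp h, mul_zero]

open Classical in
noncomputable def comp (α : ℝ) (l : ℂ) (p : R3) : R3 :=
  ∑ m ∈ p.support.filter (fun m => wt α m = l), monomial m (coeff m p)

lemma coeff_comp (l : ℂ) (p : R3) (n : Fin 3 →₀ ℕ) :
    coeff n (comp α l p) = if wt α n = l then coeff n p else 0 := by
  classical
  rw [comp, coeff_sum]
  have h1 : ∀ m ∈ p.support.filter (fun m => wt α m = l),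
      coeff n (monomial m (coeff m p)) = if m = n then coeff m p else 0 := by
    intro m _; rw [coeff_monomial]
  rw [Finset.sum_congr rfl h1, Finset.sum_ite_eq']
  by_cases hn : n ∈ p.support
  · by_cases hw : wt α n = l
    · rw [if_pos (Finset.mem_filter.mpr ⟨hn, hw⟩), if_pos hw]
    · have hnot : n ∉ p.support.filter (fun m => wt α m = l) := by
        simp only [Finset.mem_filter]; tauto
      rw [if_neg hnot, if_neg hw]
  · have h0 : coeff n p = 0 := MvPolynomial.notMem_support_iff.mp hn
    have hnot : n ∉ p.support.filter (fun m => wt α m = l) := by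
      simp only [Finset.mem_filter]; tauto
    rw [if_neg hnot, h0]
    split_ifs <;> rfl

lemma comp_mem (h12 : B.bracket (X 0) (X 1) = X 1)
    (h13 : B.bracket (X 0) (X 2) = C (α : ℂ) * X 2)
    {I : Ideal R3} (hI : IsPoissonIdeal B I) :
    ∀ (N : ℕ) (f : R3), f ∈ I → (f.support.image (wt α)).card ≤ N → ∀ l, comp α l f ∈ I := by
  classical
  intro N
  induction N with
  | zero =>
      intro f hf hcard l
      have h0 : f.support = ∅ := by
        by_contra h
        obtain ⟨m, hm⟩ := Finset.nonempty_iff_ne_empty.mpr h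
        have h1 : wt α m ∈ f.support.image (wt α) := Finset.mem_image_of_mem _ hm
        have := Finset.card_pos.mpr ⟨_, h1⟩
        omega
      have hf0 : f = 0 := MvPolynomial.support_eq_empty.mp h0
      subst hf0
      have hc : comp α l (0 : R3) = 0 := by
        apply MvPolynomial.ext
        intro n
        rw [coeff_comp]
        split_ifs <;> simp
      rw [hc]; exact zero_mem I
  | succ N ih =>
      intro f hf hcard l
      by_cases hall : ∀ m ∈ f.support, wt α m = l
      · have hc : comp α l f = f := by
          apply MvPolynomial.ext
          intro n
          rw [coeff_comp]
          by_cases hn : n ∈ f.support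
          · rw [if_pos (hall n hn)]
          · have h0 : coeff n f = 0 := MvPolynomial.notMem_support_iff.mp hn
            rw [h0]; split_ifs <;> rfl
        rw [hc]; exact hf
      · push_neg at hall
        obtain ⟨m₁, hm₁, hm₁l⟩ := hall
        set μ := wt α m₁ with hμ
        set q := B.bracket (X 0) f - C μ * f with hq
        have hqI : q ∈ I := sub_mem (hI _ _ hf) (Ideal.mul_mem_left _ _ hf)
        have hcoeffq : ∀ n, coeff n q = (wt α n - μ) * coeff n f := by
          intro n
          rw [hq, coeff_sub, coeff_D1 h12 h13, coeff_C_mul, sub_mul]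
        have hsub : q.support.image (wt α) ⊆ (f.support.image (wt α)).erase μ := by
          intro w hw
          obtain ⟨n, hn, rfl⟩ := Finset.mem_image.mp hw
          have hnq : coeff n q ≠ 0 := MvPolynomial.mem_support_iff.mp hn
          rw [hcoeffq] at hnq
          have h1 : wt α n ≠ μ := fun h => hnq (by rw [h, sub_self, zero_mul])
          have h2 : coeff n f ≠ 0 := fun h => hnq (by rw [h, mul_zero])
          exact Finset.mem_erase.mpr
            ⟨h1, Finset.mem_image_of_mem _ (MvPolynomial.mem_support_iff.mpr h2)⟩
        have hμmem : μ ∈ f.support.image (wt α) := Finset.mem_image_of_mem _ hm₁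
        have hcard' : (q.support.image (wt α)).card ≤ N := by
          have hc1 := Finset.card_le_card hsub
          have hc2 := Finset.card_erase_of_mem hμmem
          omega
        have hcq : comp α l q ∈ I := ih q hqI hcard' l
        have hkey : comp α l f = C (l - μ)⁻¹ * comp α l q := by
          apply MvPolynomial.ext
          intro n
          rw [coeff_C_mul, coeff_comp, coeff_comp, hcoeffq]
          split_ifs with h
          · rw [h, ← mul_assoc, inv_mul_cancel₀ (sub_ne_zero.mpr (Ne.symm hm₁l)), one_mul]
          · rw [mul_zero]
        rw [hkey]
        exact Ideal.mul_mem_left _ _ hcq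

lemma wt_inj (hα : Irrational α) {m m' : Fin 3 →₀ ℕ} (h : wt α m = wt α m') :
    m 1 = m' 1 ∧ m 2 = m' 2 := by
  rw [wt, wt] at h
  have hre : (m 1 : ℝ) + α * (m 2 : ℕ) = (m' 1 : ℝ) + α * (m' 2 : ℕ) := by
    have h2 := congrArg Complex.re h
    simpa [Complex.add_re, Complex.mul_re] using h2
  have h2 : m 2 = m' 2 := by
    by_contra hk
    have hk' : ((m 2 : ℝ)) - (m' 2 : ℝ) ≠ 0 := by
      intro h0
      exact hk (by exact_mod_cast sub_eq_zero.mp h0)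
    apply hα
    refine ⟨((m' 1 : ℚ) - (m 1 : ℚ)) / ((m 2 : ℚ) - (m' 2 : ℚ)), ?_⟩
    push_cast
    rw [div_eq_iff hk']
    linarith
  refine ⟨?_, h2⟩
  have h3 : (m 1 : ℝ) = (m' 1 : ℝ) := by
    rw [h2] at hre
    linarith
  exact_mod_cast h3

lemma mem_span_X (i : Fin 3) (f : R3) (h : ∀ m ∈ f.support, m i ≠ 0) :
    f ∈ Ideal.span {(X i : R3)} := by
  classical
  rw [Ideal.mem_span_singleton]
  refine ⟨∑ m ∈ f.support, monomial (m - Finsupp.single i 1) (coeff m f), ?_⟩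
  rw [Finset.mul_sum]
  conv_lhs => rw [f.as_sum]
  refine Finset.sum_congr rfl fun m hm => ?_
  rw [X_eq_monomial, monomial_mul, one_mul, single_add_sub i m (h m hm)]

end Test3
end PoissonAux
namespace PoissonAux
open MvPolynomial
section Test4
variable {B : PoissonBracket ℂ R3} {α : ℝ}

lemma single_add_sub' (i : Fin 3) (m : Fin 3 →₀ ℕ) (h : m i ≠ 0) :
    (m - Finsupp.single i 1) + Finsupp.single i 1 = m := by
  rw [add_comm]; exact single_add_sub i m h

lemma desc_base {I : Ideal R3} {μ : Fin 3 →₀ ℕ} {p : R3} (hp : p ∈ I) (hp0 : p ≠ 0)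
    (hsup : ∀ m ∈ p.support, ∀ s : Fin 3, s ≠ 0 → m s = μ s)
    (hz : ∀ m ∈ p.support, m 0 = 0) (hμ : μ 0 = 0) :
    monomial μ 1 ∈ I := by
  have hmem : ∀ m ∈ p.support, m = μ := by
    intro m hm
    ext s
    rcases eq_or_ne s 0 with rfl | hs
    · rw [hz m hm, hμ]
    · exact hsup m hm s hs
  obtain ⟨m₀, hm₀⟩ := MvPolynomial.support_nonempty.mpr hp0
  have hμs : μ ∈ p.support := hmem m₀ hm₀ ▸ hm₀
  have hc : coeff μ p ≠ 0 := MvPolynomial.mem_support_iff.mp hμs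
  set c := coeff μ p with hcdef
  have hpm : p = monomial μ c := by
    apply MvPolynomial.ext
    intro n
    rw [coeff_monomial]
    by_cases hn : n ∈ p.support
    · have h := hmem n hn
      rw [if_pos h.symm, h]
    · rw [MvPolynomial.notMem_support_iff.mp hn]
      split_ifs with h
      · exact absurd hμs (by rw [h]; exact hn)
      · rfl
  have hkey : monomial μ (1 : ℂ) = C c⁻¹ * p := by
    rw [hpm, C_mul_monomial, inv_mul_cancel₀ hc]
  rw [hkey]
  exact Ideal.mul_mem_left _ _ hp

lemma desc {t : Fin 3} (ht : t ≠ 0) {e : ℂ} (he : e ≠ 0)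
    (hbr : ∀ q : R3, B.bracket (X t) q = C e * (X t * pderiv 0 q))
    {I : Ideal R3} (hI : IsPoissonIdeal B I) :
    ∀ (N : ℕ) (μ : Fin 3 →₀ ℕ), μ 0 = 0 → ∀ p ∈ I, p ≠ 0 →
      (∀ m ∈ p.support, (∀ s : Fin 3, s ≠ 0 → m s = μ s) ∧ m 0 ≤ N) →
      ∃ n : ℕ, monomial (μ + Finsupp.single t n) 1 ∈ I := by
  intro N
  induction N with
  | zero =>
      intro μ hμ p hp hp0 hsup
      refine ⟨0, ?_⟩
      rw [Finsupp.single_zero, add_zero]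
      exact desc_base hp hp0 (fun m hm => (hsup m hm).1)
        (fun m hm => Nat.le_zero.mp (hsup m hm).2) hμ
  | succ N ih =>
      intro μ hμ p hp hp0 hsup
      by_cases hz : ∀ m ∈ p.support, m 0 = 0
      · refine ⟨0, ?_⟩
        rw [Finsupp.single_zero, add_zero]
        exact desc_base hp hp0 (fun m hm => (hsup m hm).1) hz hμ
      · push_neg at hz
        obtain ⟨m₁, hm₁, hm₁0⟩ := hz
        set q := B.bracket (X t) p with hqdef
        have hqI : q ∈ I := hI _ _ hp
        have hqe : q = C e * (X t * pderiv 0 p) := hbr p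
        -- q ≠ 0
        have hpd : pderiv 0 p ≠ 0 := by
          intro h0
          have hc := coeff_pderiv 0 p (m₁ - Finsupp.single 0 1)
          rw [single_add_sub' 0 m₁ hm₁0, h0, coeff_zero] at hc
          have hc2 : coeff m₁ p ≠ 0 := MvPolynomial.mem_support_iff.mp hm₁
          have hne : (((m₁ - Finsupp.single 0 1 : Fin 3 →₀ ℕ) 0 : ℕ) : ℂ) + 1 ≠ 0 := by
            have hh : (((m₁ - Finsupp.single 0 1 : Fin 3 →₀ ℕ) 0 : ℕ) : ℂ) + 1
                = (((m₁ - Finsupp.single 0 1 : Fin 3 →₀ ℕ) 0 + 1 : ℕ) : ℂ) := by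
              push_cast; ring
            rw [hh]
            exact Nat.cast_ne_zero.mpr (by omega)
          exact (mul_ne_zero hc2 hne) hc.symm
        have hq0 : q ≠ 0 := by
          rw [hqe]
          exact mul_ne_zero (fun h => he (by simpa using h))
            (mul_ne_zero (X_ne_zero _) hpd)
        -- support of q
        have hqsup : ∀ m ∈ q.support, (∀ s : Fin 3, s ≠ 0 →
            m s = (μ + Finsupp.single t 1 : Fin 3 →₀ ℕ) s) ∧ m 0 ≤ N := by
          intro m hm
          have hcm : coeff m q ≠ 0 := MvPolynomial.mem_support_iff.mp hm
          rw [hqe] at hcm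
          classical
          rw [coeff_C_mul, coeff_X_mul'] at hcm
          have hmt : t ∈ m.support := by
            by_contra hmt
            rw [if_neg hmt, mul_zero] at hcm
            exact hcm rfl
          rw [if_pos hmt] at hcm
          have hmt' : m t ≠ 0 := Finsupp.mem_support_iff.mp hmt
          have hcp : coeff ((m - Finsupp.single t 1) + Finsupp.single 0 1) p ≠ 0 := by
            intro h0
            rw [coeff_pderiv, h0, zero_mul, mul_zero] at hcm
            exact hcm rfl
          set m'' := (m - Finsupp.single t 1) + Finsupp.single 0 1 with hm''
          have hm''sup : m'' ∈ p.support := MvPolynomial.mem_support_iff.mpr hcp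
          obtain ⟨h1, h2⟩ := hsup m'' hm''sup
          have hm''0 : m'' 0 = m 0 + 1 := by
            rw [hm'', Finsupp.add_apply, Finsupp.tsub_apply, Finsupp.single_eq_same,
              Finsupp.single_eq_of_ne' ht]
            omega
          have hm''s : ∀ s : Fin 3, s ≠ 0 → s ≠ t → m'' s = m s := by
            intro s hs0 hst
            rw [hm'', Finsupp.add_apply, Finsupp.tsub_apply,
              Finsupp.single_eq_of_ne' (Ne.symm hst), Finsupp.single_eq_of_ne' (Ne.symm hs0)]
            omega
          have hm''t : m'' t = m t - 1 := by
            rw [hm'', Finsupp.add_apply, Finsupp.tsub_apply, Finsupp.single_eq_same,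
              Finsupp.single_eq_of_ne' (Ne.symm ht)]
            omega
          constructor
          · intro s hs
            rcases eq_or_ne s t with rfl | hst
            · have hthis := h1 s hs
              rw [hm''t] at hthis
              rw [Finsupp.add_apply, Finsupp.single_eq_same]
              omega
            · have hthis := h1 s hs
              rw [hm''s s hs hst] at hthis
              rw [Finsupp.add_apply, Finsupp.single_eq_of_ne' (Ne.symm hst)]
              omega
          · omega
        have hμ' : (μ + Finsupp.single t 1 : Fin 3 →₀ ℕ) 0 = 0 := by
          rw [Finsupp.add_apply, Finsupp.single_eq_of_ne' ht, hμ]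
          omega
        obtain ⟨n, hn⟩ := ih (μ + Finsupp.single t 1) hμ' q hqI hq0 hqsup
        refine ⟨n + 1, ?_⟩
        have : μ + Finsupp.single t 1 + Finsupp.single t n
            = μ + Finsupp.single t (n + 1) := by
          rw [add_assoc, ← Finsupp.single_add, Nat.add_comm 1 n]
        rw [← this]
        exact hn

end Test4
end PoissonAux
namespace PoissonAux
open MvPolynomial
section Test5
variable {B : PoissonBracket ℂ R3} {α : ℝ}

lemma main_lemma (hα : Irrational α) (h12 : B.bracket (X 0) (X 1) = X 1)
    (h13 : B.bracket (X 0) (X 2) = C (α : ℂ) * X 2)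
    {t : Fin 3} (ht : t ≠ 0) {e : ℂ} (he : e ≠ 0)
    (hbr : ∀ q : R3, B.bracket (X t) q = C e * (X t * pderiv 0 q))
    {I : Ideal R3} (hI : IsPoissonIdeal B I) {f : R3} (hf : f ∈ I)
    {m₀ : Fin 3 →₀ ℕ} (hm₀ : m₀ ∈ f.support) :
    ∃ n : ℕ, monomial ((Finsupp.single 1 (m₀ 1) + Finsupp.single 2 (m₀ 2) : Fin 3 →₀ ℕ)
      + Finsupp.single t n) 1 ∈ I := by
  classical
  set μ : Fin 3 →₀ ℕ := Finsupp.single 1 (m₀ 1) + Finsupp.single 2 (m₀ 2) with hμdef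
  have hμ0 : μ 0 = 0 := by
    rw [hμdef, Finsupp.add_apply, Finsupp.single_eq_of_ne (by decide),
      Finsupp.single_eq_of_ne (by decide)]
    omega
  set l := wt α m₀ with hldef
  set p := comp α l f with hpdef
  have hpI : p ∈ I := comp_mem h12 h13 hI (f.support.image (wt α)).card f hf le_rfl l
  have hcm₀ : coeff m₀ p = coeff m₀ f := by
    rw [hpdef, coeff_comp, if_pos rfl]
  have hp0 : p ≠ 0 := by
    intro h0
    have := MvPolynomial.mem_support_iff.mp hm₀
    rw [← hcm₀, h0, coeff_zero] at this
    exact this rfl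
  have hsup : ∀ m ∈ p.support, (∀ s : Fin 3, s ≠ 0 → m s = μ s)
      ∧ m 0 ≤ f.support.sup (fun m => m 0) := by
    intro m hm
    have hcm : coeff m p ≠ 0 := MvPolynomial.mem_support_iff.mp hm
    rw [hpdef, coeff_comp] at hcm
    by_cases hw : wt α m = l
    · rw [if_pos hw] at hcm
      have hmf : m ∈ f.support := MvPolynomial.mem_support_iff.mpr hcm
      obtain ⟨h1, h2⟩ := wt_inj hα (hw.trans hldef)
      constructor
      · intro s hs
        have hμ1 : μ 1 = m₀ 1 := by
          rw [hμdef, Finsupp.add_apply, Finsupp.single_eq_same,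
            Finsupp.single_eq_of_ne (by decide)]
          omega
        have hμ2 : μ 2 = m₀ 2 := by
          rw [hμdef, Finsupp.add_apply, Finsupp.single_eq_same,
            Finsupp.single_eq_of_ne (by decide)]
          omega
        have hs12 : s = 1 ∨ s = 2 := by
          fin_cases s
          · exact absurd rfl hs
          · exact Or.inl rfl
          · exact Or.inr rfl
        rcases hs12 with rfl | rfl
        · rw [hμ1]; exact h1
        · rw [hμ2]; exact h2
      · exact Finset.le_sup (f := fun m => m 0) hmf
    · rw [if_neg hw] at hcm
      exact absurd rfl hcm
  exact desc ht he hbr hI _ μ hμ0 p hpI hp0 hsup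

lemma exp_t1 (j k n : ℕ) :
    (Finsupp.single (1 : Fin 3) j + Finsupp.single 2 k) + Finsupp.single 1 n
      = Finsupp.single 1 (j + n) + Finsupp.single 2 k := by
  rw [add_right_comm, ← Finsupp.single_add]

lemma exp_t2 (j k n : ℕ) :
    (Finsupp.single (1 : Fin 3) j + Finsupp.single 2 k) + Finsupp.single 2 n
      = Finsupp.single 1 j + Finsupp.single 2 (k + n) := by
  rw [add_assoc, ← Finsupp.single_add]

lemma monomial_two_eq (j k : ℕ) :
    (monomial (Finsupp.single 1 j + Finsupp.single 2 k) 1 : R3) = X 1 ^ j * X 2 ^ k := by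
  rw [X_pow_eq_monomial, X_pow_eq_monomial, monomial_mul, one_mul]

lemma span_poisson {S : Set R3} (h : ∀ g ∈ S, ∀ f, B.bracket f g ∈ Ideal.span S) :
    IsPoissonIdeal B (Ideal.span S) := by
  intro a x hx
  induction hx using Submodule.span_induction with
  | mem g hg => exact h g hg a
  | zero => rw [br_zero_right]; exact zero_mem _
  | add x y hx hy ihx ihy => rw [B.add_right]; exact add_mem ihx ihy
  | smul r x hx ihx =>
      rw [smul_eq_mul, B.leibniz]
      exact add_mem (Ideal.mul_mem_left _ _ hx) (Ideal.mul_mem_left _ _ ihx)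

lemma br_X1_mem (h12 : B.bracket (X 0) (X 1) = X 1) (h23 : B.bracket (X 1) (X 2) = 0)
    (f : R3) : B.bracket f (X 1) ∈ Ideal.span {(X 1 : R3)} := by
  refine deriv_mem (D := fun g => B.bracket g (X 1)) (fun p q => B.add_left p q (X 1))
    (fun p q => leibniz_left (X 1) p q) (fun c => br_C_left (X 1) c) ?_ f
  intro i
  fin_cases i
  · show B.bracket (X 0) (X 1) ∈ _
    rw [h12]
    exact Ideal.subset_span rfl
  · show B.bracket (X 1) (X 1) ∈ _
    rw [br_self]
    exact zero_mem _
  · show B.bracket (X 2) (X 1) ∈ _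
    rw [B.antisymm, h23, neg_zero]
    exact zero_mem _

lemma br_X2_mem (h13 : B.bracket (X 0) (X 2) = C (α : ℂ) * X 2)
    (h23 : B.bracket (X 1) (X 2) = 0)
    (f : R3) : B.bracket f (X 2) ∈ Ideal.span {(X 2 : R3)} := by
  refine deriv_mem (D := fun g => B.bracket g (X 2)) (fun p q => B.add_left p q (X 2))
    (fun p q => leibniz_left (X 2) p q) (fun c => br_C_left (X 2) c) ?_ f
  intro i
  fin_cases i
  · show B.bracket (X 0) (X 2) ∈ _
    rw [h13]
    exact Ideal.mul_mem_left _ _ (Ideal.subset_span rfl)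
  · show B.bracket (X 1) (X 2) ∈ _
    rw [h23]
    exact zero_mem _
  · show B.bracket (X 2) (X 2) ∈ _
    rw [br_self]
    exact zero_mem _

lemma br_X0_mem (h12 : B.bracket (X 0) (X 1) = X 1)
    (h13 : B.bracket (X 0) (X 2) = C (α : ℂ) * X 2)
    (f : R3) : B.bracket f (X 0) ∈ Ideal.span {(X 1 : R3), X 2} := by
  refine deriv_mem (D := fun g => B.bracket g (X 0)) (fun p q => B.add_left p q (X 0))
    (fun p q => leibniz_left (X 0) p q) (fun c => br_C_left (X 0) c) ?_ f
  intro i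
  fin_cases i
  · show B.bracket (X 0) (X 0) ∈ _
    rw [br_self]
    exact zero_mem _
  · show B.bracket (X 1) (X 0) ∈ _
    rw [B.antisymm, h12]
    exact neg_mem (Ideal.subset_span (Set.mem_insert _ _))
  · show B.bracket (X 2) (X 0) ∈ _
    rw [B.antisymm, h13]
    exact neg_mem (Ideal.mul_mem_left _ _
      (Ideal.subset_span (Set.mem_insert_of_mem _ rfl)))

lemma poisson_span_X1 (h12 : B.bracket (X 0) (X 1) = X 1)
    (h23 : B.bracket (X 1) (X 2) = 0) : IsPoissonIdeal B (Ideal.span {(X 1 : R3)}) := by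
  apply span_poisson
  intro g hg f
  rw [Set.mem_singleton_iff] at hg
  subst hg
  exact br_X1_mem h12 h23 f

lemma poisson_span_X2 (h13 : B.bracket (X 0) (X 2) = C (α : ℂ) * X 2)
    (h23 : B.bracket (X 1) (X 2) = 0) : IsPoissonIdeal B (Ideal.span {(X 2 : R3)}) := by
  apply span_poisson
  intro g hg f
  rw [Set.mem_singleton_iff] at hg
  subst hg
  exact br_X2_mem h13 h23 f

lemma poisson_m (h12 : B.bracket (X 0) (X 1) = X 1)
    (h13 : B.bracket (X 0) (X 2) = C (α : ℂ) * X 2)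
    (h23 : B.bracket (X 1) (X 2) = 0) (a : ℂ) :
    IsPoissonIdeal B (Ideal.span {X 0 - C a, X 1, X 2}) := by
  apply span_poisson
  intro g hg f
  simp only [Set.mem_insert_iff, Set.mem_singleton_iff] at hg
  rcases hg with rfl | rfl | rfl
  · rw [br_sub_right, br_C_right, sub_zero]
    refine Ideal.span_mono ?_ (br_X0_mem h12 h13 f)
    intro y hy
    simp only [Set.mem_insert_iff, Set.mem_singleton_iff] at hy
    simp only [Set.mem_insert_iff, Set.mem_singleton_iff]
    tauto
  · refine Ideal.span_mono ?_ (br_X1_mem h12 h23 f)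
    intro y hy
    rw [Set.mem_singleton_iff] at hy
    simp [hy]
  · refine Ideal.span_mono ?_ (br_X2_mem h13 h23 f)
    intro y hy
    rw [Set.mem_singleton_iff] at hy
    simp [hy]

lemma core_le (J : Ideal R3) : poissonCore B J ≤ J :=
  sSup_le (fun _ hI => hI.2)

lemma core_of_poisson {J : Ideal R3} (hJ : IsPoissonIdeal B J) : poissonCore B J = J :=
  le_antisymm (core_le J) (le_sSup ⟨hJ, le_rfl⟩)

lemma eval_span_zero (x : Fin 3 → ℂ) (S : Set R3) (h : ∀ g ∈ S, eval x g = 0) :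
    ∀ p ∈ Ideal.span S, eval x p = 0 := by
  intro p hp
  have hle : Ideal.span S ≤ RingHom.ker (eval x) :=
    Ideal.span_le.mpr (fun g hg => RingHom.mem_ker.mpr (h g hg))
  exact hle hp

end Test5
end PoissonAux

open PoissonAux in
open MvPolynomial in
/-- the Poisson cores of the maximal ideals of `ℂ[x₁,x₂,x₃]` with the
Kirillov-Kostant-Souriau bracket `{x₁,x₂} = x₂`, `{x₁,x₃} = αx₃`, `{x₂,x₃} = 0` for an
irrational real `α`. -/
theorem poisson_cores_nonalgebraic_solvable (α : ℝ) (hα : Irrational α)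
    (B : PoissonBracket ℂ (MvPolynomial (Fin 3) ℂ))
    (h12 : B.bracket (X 0) (X 1) = X 1)
    (h13 : B.bracket (X 0) (X 2) = C (α : ℂ) * X 2)
    (h23 : B.bracket (X 1) (X 2) = 0) :
    (∀ a : ℂ, poissonCore B (Ideal.span {X 0 - C a, X 1, X 2}) =
      Ideal.span {X 0 - C a, X 1, X 2}) ∧
    (∀ a b : ℂ, b ≠ 0 → poissonCore B (Ideal.span {X 0 - C a, X 1 - C b, X 2}) =
      Ideal.span {(X 2 : MvPolynomial (Fin 3) ℂ)}) ∧
    (∀ a c : ℂ, c ≠ 0 → poissonCore B (Ideal.span {X 0 - C a, X 1, X 2 - C c}) =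
      Ideal.span {(X 1 : MvPolynomial (Fin 3) ℂ)}) ∧
    (∀ a b c : ℂ, b ≠ 0 → c ≠ 0 →
      poissonCore B (Ideal.span {X 0 - C a, X 1 - C b, X 2 - C c}) = ⊥) := by
  refine ⟨?_, ?_, ?_, ?_⟩
  · intro a
    exact core_of_poisson (poisson_m h12 h13 h23 a)
  · intro a b hb
    apply le_antisymm
    · apply sSup_le
      rintro I ⟨hI, hIJ⟩
      intro f hf
      apply mem_span_X
      intro m hm
      by_contra hm2
      obtain ⟨n, hn⟩ := main_lemma hα h12 h13 (t := 1) (by decide)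
        (e := (-1 : ℂ)) (by norm_num) (D2_eq h12 h23) hI hf hm
      rw [exp_t1, hm2, Finsupp.single_zero, add_zero, ← X_pow_eq_monomial] at hn
      have hev := eval_span_zero ![a, b, 0] _ ?_ _ (hIJ hn)
      · rw [map_pow, eval_X] at hev
        simp only [Matrix.cons_val_one, Matrix.head_cons] at hev
        exact pow_ne_zero _ hb hev
      · intro g hg
        simp only [Set.mem_insert_iff, Set.mem_singleton_iff] at hg
        rcases hg with rfl | rfl | rfl <;> simp
    · refine le_sSup ⟨poisson_span_X2 h13 h23, Ideal.span_mono ?_⟩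
      intro y hy
      rw [Set.mem_singleton_iff] at hy
      simp [hy]
  · intro a c hc
    apply le_antisymm
    · apply sSup_le
      rintro I ⟨hI, hIJ⟩
      intro f hf
      apply mem_span_X
      intro m hm
      by_contra hm1
      have hne : (-(α : ℂ)) ≠ 0 := by
        simp only [ne_eq, neg_eq_zero, Complex.ofReal_eq_zero]
        exact hα.ne_zero
      obtain ⟨n, hn⟩ := main_lemma hα h12 h13 (t := 2) (by decide)
        hne (D3_eq h13 h23) hI hf hm
      rw [exp_t2, hm1, Finsupp.single_zero, zero_add, ← X_pow_eq_monomial] at hn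
      have hev := eval_span_zero ![a, 0, c] _ ?_ _ (hIJ hn)
      · rw [map_pow, eval_X] at hev
        simp only [Matrix.cons_val_two, Matrix.tail_cons, Matrix.head_cons] at hev
        exact pow_ne_zero _ hc hev
      · intro g hg
        simp only [Set.mem_insert_iff, Set.mem_singleton_iff] at hg
        rcases hg with rfl | rfl | rfl <;> simp
    · refine le_sSup ⟨poisson_span_X1 h12 h23, Ideal.span_mono ?_⟩
      intro y hy
      rw [Set.mem_singleton_iff] at hy
      simp [hy]
  · intro a b c hb hc
    apply le_antisymm
    · apply sSup_le
      rintro I ⟨hI, hIJ⟩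
      intro f hf
      rw [Ideal.mem_bot]
      by_contra hf0
      obtain ⟨m, hm⟩ := MvPolynomial.support_nonempty.mpr hf0
      obtain ⟨n, hn⟩ := main_lemma hα h12 h13 (t := 1) (by decide)
        (e := (-1 : ℂ)) (by norm_num) (D2_eq h12 h23) hI hf hm
      rw [exp_t1, monomial_two_eq] at hn
      have hev := eval_span_zero ![a, b, c] _ ?_ _ (hIJ hn)
      · rw [map_mul, map_pow, map_pow, eval_X, eval_X] at hev
        simp only [Matrix.cons_val_one, Matrix.head_cons, Matrix.cons_val_two,
          Matrix.tail_cons] at hev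
        exact mul_ne_zero (pow_ne_zero _ hb) (pow_ne_zero _ hc) hev
      · intro g hg
        simp only [Set.mem_insert_iff, Set.mem_singleton_iff] at hg
        rcases hg with rfl | rfl | rfl <;> simp
    · exact bot_le
end
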